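/- arXiv:1205.1174 — 8 statements merged into one kernel-verified Lean document; each statement's English description precedes it below -/
import Mathlib

section
/- Let (X, μ) be a standard Borel probability space and let ρ be a measurable semimetric on X. Then the following conditions are equivalent: (1) ρ is admissible, i.e., there is a subset X₁ ⊆ X of full measure such that (X₁, ρ) is separable; (2) for every ε>0 the ε-entropy H_ε(ρ, μ) is finite; (4) for μ-almost all x ∈ X and every ε>0, the ball {y ∈ X : ρ(x,y) < ε} has positive μ-measure; (5) for every ε>0 the space X can be written as a union X₀ ∪ X₁ ∪ … ∪ X_k of measurable sets with μ(X₀) < ε and essential ρ-diameter of X_j less than ε for j=1,…,k; (6) for every measurable set A ⊆ X of positive measure, the essential infimum of ρ over A×A is zero. -/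
open MeasureTheory Filter Function Set
open scoped ENNReal

/-- A semimetric on `X`: a nonnegative function vanishing on the diagonal, symmetric and
satisfying the triangle inequality for all points. -/
def IsSemimetric {X : Type*} (ρ : X → X → ℝ) : Prop :=
  (∀ x y, 0 ≤ ρ x y) ∧ (∀ x, ρ x x = 0) ∧ (∀ x y, ρ x y = ρ y x) ∧
    ∀ x y z, ρ x z ≤ ρ x y + ρ y z

/-- A metric on `X`: a semimetric that separates points. -/
def IsMetricFun {X : Type*} (ρ : X → X → ℝ) : Prop :=
  IsSemimetric ρ ∧ ∀ x y, ρ x y = 0 ↔ x = y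

/-- The semimetric space `(S, ρ)` is separable. -/
def SeparableOn {X : Type*} (ρ : X → X → ℝ) (S : Set X) : Prop :=
  ∃ D : Set X, D ⊆ S ∧ D.Countable ∧ ∀ x ∈ S, ∀ ε : ℝ, 0 < ε → ∃ y ∈ D, ρ x y < ε

/-- A semimetric is admissible for `(X, μ)` if it is measurable on `(X × X, μ × μ)` and
separable on a subset of full measure. -/
def Admissible {X : Type*} [MeasurableSpace X] (μ : Measure X) (ρ : X → X → ℝ) : Prop :=
  Measurable (Function.uncurry ρ) ∧
    ∃ S : Set X, MeasurableSet S ∧ μ Sᶜ = 0 ∧ SeparableOn ρ S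

/-- An `ε`-cover of size `k`: `X = X₀ ∪ X₁ ∪ ⋯ ∪ X_k` with `μ(X₀) < ε` and
`diam_ρ(X_j) < ε` for `j = 1, …, k`. -/
def IsEpsCover {X : Type*} [MeasurableSpace X] (μ : Measure X) (ρ : X → X → ℝ)
    (ε : ℝ) (k : ℕ) : Prop :=
  ∃ A : Fin (k + 1) → Set X, (∀ i, MeasurableSet (A i)) ∧ (⋃ i, A i) = Set.univ ∧
    μ (A 0) < ENNReal.ofReal ε ∧
    ∀ i, i ≠ 0 → ∀ x ∈ A i, ∀ y ∈ A i, ρ x y < ε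

/-- The `ε`-entropy of `(X, μ, ρ)`: the binary logarithm of the smallest size of an
`ε`-cover, and `∞` if there is no finite `ε`-cover. -/
noncomputable def epsEntropy {X : Type*} [MeasurableSpace X] (μ : Measure X)
    (ρ : X → X → ℝ) (ε : ℝ) : ℝ≥0∞ :=
  sInf {h : ℝ≥0∞ | ∃ k : ℕ, IsEpsCover μ ρ ε k ∧ h = ENNReal.ofReal (Real.logb 2 k)}

/-- The m-norm of `f`: the infimum of the `L¹`-norms of measurable semimetrics
dominating `|f|` almost everywhere (`∞` if there is no such semimetric). -/
noncomputable def mnorm {X : Type*} [MeasurableSpace X] (μ : Measure X)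
    (f : X → X → ℝ) : ℝ≥0∞ :=
  sInf {c : ℝ≥0∞ | ∃ ρ : X → X → ℝ, IsSemimetric ρ ∧ Measurable (Function.uncurry ρ) ∧
    (∀ᵐ p ∂(μ.prod μ), |f p.1 p.2| ≤ ρ p.1 p.2) ∧
    c = ∫⁻ p, ENNReal.ofReal (ρ p.1 p.2) ∂(μ.prod μ)}

/-- The m-distance between two functions. -/
noncomputable def mdist {X : Type*} [MeasurableSpace X] (μ : Measure X)
    (f g : X → X → ℝ) : ℝ≥0∞ :=
  mnorm μ fun x y => f x y - g x y

/-- The `L¹(X × X, μ × μ)` distance between two functions. -/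
noncomputable def L1dist {X : Type*} [MeasurableSpace X] (μ : Measure X)
    (f g : X → X → ℝ) : ℝ≥0∞ :=
  ∫⁻ p, ENNReal.ofReal |f p.1 p.2 - g p.1 p.2| ∂(μ.prod μ)

/-- The essential diameter of `A`: the essential supremum of `ρ` over `A × A`. -/
noncomputable def essDiam {X : Type*} [MeasurableSpace X] (μ : Measure X)
    (ρ : X → X → ℝ) (A : Set X) : ℝ≥0∞ :=
  essSup (fun p : X × X => ENNReal.ofReal (ρ p.1 p.2))
    ((μ.restrict A).prod (μ.restrict A))


section Aux
variable {X : Type*} [MeasurableSpace X] {μ : Measure X} {ρ : X → X → ℝ}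

lemma aux_ball_measurable (hmeas : Measurable (Function.uncurry ρ)) (x : X) (c : ℝ) :
    MeasurableSet {y | ρ x y < c} := by
  have : Measurable fun y => ρ x y := hmeas.comp (measurable_prodMk_left)
  exact measurableSet_lt this measurable_const

lemma aux_measure_ball_measurable [SFinite μ] (hmeas : Measurable (Function.uncurry ρ))
    (c : ℝ) : Measurable fun x => μ {y | ρ x y < c} := by
  have hs : MeasurableSet {p : X × X | ρ p.1 p.2 < c} :=
    measurableSet_lt hmeas measurable_const
  exact measurable_measure_prodMk_left hs

end Aux

section Impl
variable {X : Type*} [MeasurableSpace X] (μ : Measure X) [IsProbabilityMeasure μ]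
  (ρ : X → X → ℝ)

lemma impl_3_1 (hρ : IsSemimetric ρ) (hmeas : Measurable (Function.uncurry ρ))
    (h3 : ∀ᵐ x ∂μ, ∀ ε : ℝ, 0 < ε → 0 < μ {y | ρ x y < ε}) :
    ∃ S : Set X, MeasurableSet S ∧ μ Sᶜ = 0 ∧ SeparableOn ρ S := by
  obtain ⟨hnn, hzero, hsymm, htri⟩ := hρ
  set S : Set X := ⋂ n : ℕ, {x | 0 < μ {y | ρ x y < 1 / ((n : ℝ) + 1)}} with hS
  have hSmeas : MeasurableSet S := by
    refine MeasurableSet.iInter fun n => ?_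
    exact (aux_measure_ball_measurable hmeas (1 / ((n : ℝ) + 1))) measurableSet_Ioi
  have hSc : μ Sᶜ = 0 := by
    have hsub : Sᶜ ⊆ {x | ¬ ∀ ε : ℝ, 0 < ε → 0 < μ {y | ρ x y < ε}} := by
      intro x hx
      simp only [hS, compl_iInter, mem_iUnion, mem_compl_iff, mem_setOf_eq, not_lt] at hx
      obtain ⟨n, hn⟩ := hx
      intro hall
      exact absurd (hall (1 / ((n : ℝ) + 1)) (by positivity)) (not_lt.mpr hn)
    exact measure_mono_null hsub (by simpa [ae_iff] using h3)
  refine ⟨S, hSmeas, hSc, ?_⟩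
  have hzorn : ∀ n : ℕ, ∃ T, Maximal
      (· ∈ {T : Set X | T ⊆ S ∧ T.Pairwise fun x y => 1 / ((n : ℝ) + 1) ≤ ρ x y}) T := by
    intro n
    apply zorn_subset
    intro c hc hchain
    refine ⟨⋃₀ c, ⟨?_, ?_⟩, fun s hs => subset_sUnion_of_mem hs⟩
    · exact sUnion_subset fun t ht => (hc ht).1
    · intro x hx y hy hxy
      obtain ⟨a, hac, hxa⟩ := hx
      obtain ⟨b, hbc, hyb⟩ := hy
      rcases hchain.total hac hbc with hab | hba
      · exact (hc hbc).2 (hab hxa) hyb hxy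
      · exact (hc hac).2 hxa (hba hyb) hxy
  choose T hT using hzorn
  have hTcount : ∀ n : ℕ, (T n).Countable := by
    intro n
    have hTS : T n ⊆ S := (hT n).1.1
    set r : ℝ := 1 / (((2 * n + 1 : ℕ) : ℝ) + 1) with hr
    have hdisj : Pairwise (Disjoint on fun t : T n => {y | ρ (t : X) y < r}) := by
      intro a b hab
      have hne : (a : X) ≠ (b : X) := Subtype.coe_ne_coe.mpr hab
      rw [Function.onFun, Set.disjoint_left]
      intro z hza hzb
      have hsep := (hT n).1.2 a.2 b.2 hne
      have h1 : ρ (a : X) z < r := hza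
      have h2 : ρ (b : X) z < r := hzb
      have h3 : ρ (a : X) (b : X) ≤ ρ (a : X) z + ρ z (b : X) := htri _ _ _
      rw [hsymm z b] at h3
      have hrr : 2 * r = 1 / ((n : ℝ) + 1) := by
        rw [hr]; push_cast; field_simp; ring
      nlinarith [hsep]
    have hcnt := MeasureTheory.Measure.countable_meas_pos_of_disjoint_iUnion
      (μ := μ) (fun t : T n => aux_ball_measurable hmeas (t : X) r) hdisj
    have huniv : {i : T n | 0 < μ {y | ρ (i : X) y < r}} = univ := by
      ext t
      simp only [mem_setOf_eq, mem_univ, iff_true]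
      have hts := hTS t.2
      simp only [hS, mem_iInter, mem_setOf_eq] at hts
      exact hts (2 * n + 1)
    rw [huniv, Set.countable_univ_iff] at hcnt
    exact Set.countable_coe_iff.mpr hcnt
  refine ⟨⋃ n, T n, iUnion_subset fun n => (hT n).1.1, Set.countable_iUnion hTcount, ?_⟩
  intro x hx ε hε
  obtain ⟨n, hn⟩ := exists_nat_one_div_lt hε
  by_cases hxT : x ∈ T n
  · exact ⟨x, mem_iUnion.mpr ⟨n, hxT⟩, by rw [hzero]; exact hε⟩
  · by_contra hcon
    push_neg at hcon
    have hext : T n ∪ {x} ∈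
        {T : Set X | T ⊆ S ∧ T.Pairwise fun a b => 1 / ((n : ℝ) + 1) ≤ ρ a b} := by
      constructor
      · exact union_subset (hT n).1.1 (singleton_subset_iff.mpr hx)
      · intro a ha b hb hab
        rcases ha with ha | ha <;> rcases hb with hb | hb
        · exact (hT n).1.2 ha hb hab
        · rw [mem_singleton_iff] at hb; subst hb
          have hc := hcon a (mem_iUnion.mpr ⟨n, ha⟩)
          rw [hsymm]; linarith
        · rw [mem_singleton_iff] at ha; subst ha
          have hc := hcon b (mem_iUnion.mpr ⟨n, hb⟩)
          linarith
        · exact absurd (ha.trans hb.symm) hab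
    have hsub := (hT n).2 hext (subset_union_left)
    exact hxT (hsub (mem_union_right _ rfl))

end Impl

section Impl2
variable {X : Type*} [MeasurableSpace X] (μ : Measure X) [IsProbabilityMeasure μ]
  (ρ : X → X → ℝ)

lemma impl_1_2 (hρ : IsSemimetric ρ) (hmeas : Measurable (Function.uncurry ρ))
    (h1 : ∃ S : Set X, MeasurableSet S ∧ μ Sᶜ = 0 ∧ SeparableOn ρ S) :
    ∀ ε : ℝ, 0 < ε → epsEntropy μ ρ ε ≠ ∞ := by
  obtain ⟨hnn, hzero, hsymm, htri⟩ := hρ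
  obtain ⟨S, hSm, hSc, D, hDS, hDc, hdense⟩ := h1
  intro ε hε
  have hSne : S.Nonempty := by
    rw [Set.nonempty_iff_ne_empty]
    intro h
    rw [h, Set.compl_empty] at hSc
    simpa [hSc] using (measure_univ (μ := μ))
  have hDne : D.Nonempty := by
    obtain ⟨x, hx⟩ := hSne
    obtain ⟨y, hy, _⟩ := hdense x hx 1 one_pos
    exact ⟨y, hy⟩
  obtain ⟨d, hd⟩ := Set.Countable.exists_eq_range hDc hDne
  set B : ℕ → Set X := fun n => {y | ρ (d n) y < ε / 3} with hB
  have hBm : ∀ n, MeasurableSet (B n) := fun n => aux_ball_measurable hmeas (d n) (ε / 3)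
  set K : ℕ → Set X := fun N => (⋃ n ∈ Finset.range N, B n)ᶜ with hK
  have hKm : ∀ N, MeasurableSet (K N) :=
    fun N => (MeasurableSet.biUnion (Finset.range N).countable_toSet fun n _ => hBm n).compl
  have hSB : S ⊆ ⋃ n, B n := by
    intro x hx
    obtain ⟨y, hy, hxy⟩ := hdense x hx (ε / 3) (by linarith)
    rw [hd] at hy
    obtain ⟨m, rfl⟩ := hy
    exact mem_iUnion.mpr ⟨m, by simpa [hB, hsymm] using hxy⟩
  have hInt : μ (⋂ N, K N) = 0 := by
    refine measure_mono_null ?_ hSc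
    intro x hx
    intro hxS
    obtain ⟨n, hn⟩ := mem_iUnion.mp (hSB hxS)
    have := mem_iInter.mp hx (n + 1)
    exact this (mem_biUnion (Finset.self_mem_range_succ n) hn)
  have htend : Tendsto (μ ∘ K) atTop (nhds 0) := by
    rw [← hInt]
    refine tendsto_measure_iInter_atTop (fun N => (hKm N).nullMeasurableSet) ?_ ⟨0, measure_ne_top _ _⟩
    intro a b hab
    refine compl_subset_compl.mpr ?_
    exact biUnion_subset_biUnion_left (Finset.range_subset_range.mpr hab)
  have hev : ∀ᶠ N in atTop, μ (K N) < ENNReal.ofReal ε := by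
    have := htend (Iio_mem_nhds (show (0:ℝ≥0∞) < ENNReal.ofReal ε by simpa using hε))
    simpa [Function.comp] using this
  obtain ⟨N, hN⟩ := hev.exists
  have hcov : IsEpsCover μ ρ ε N := by
    refine ⟨fun i => if i = 0 then K N else B (i.val - 1), ?_, ?_, ?_, ?_⟩
    · intro i
      by_cases hi : i = 0 <;> simp [hi, hKm, hBm]
    · ext x
      simp only [mem_iUnion, mem_univ, iff_true]
      by_cases hxK : x ∈ K N
      · exact ⟨0, by simpa using hxK⟩
      · rw [hK, mem_compl_iff, not_not] at hxK
        obtain ⟨n, hn, hxB⟩ := by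
          simpa using hxK
        refine ⟨⟨n + 1, by omega⟩, ?_⟩
        have hne : (⟨n + 1, by omega⟩ : Fin (N + 1)) ≠ 0 := by
          intro h
          simpa using congrArg Fin.val h
        simp only [hne, if_neg]
        simpa using hxB
    · simpa using hN
    · intro i hi x hxi y hyi
      simp only [if_neg hi] at hxi hyi
      have hx' : ρ (d (i.val - 1)) x < ε / 3 := hxi
      have hy' : ρ (d (i.val - 1)) y < ε / 3 := hyi
      have := htri x (d (i.val - 1)) y
      rw [hsymm x (d (i.val - 1))] at this
      linarith
  have : epsEntropy μ ρ ε ≤ ENNReal.ofReal (Real.logb 2 N) :=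
    sInf_le ⟨N, hcov, rfl⟩
  exact ne_top_of_le_ne_top ENNReal.ofReal_ne_top this

lemma impl_2_4 (hmeas : Measurable (Function.uncurry ρ))
    (h2 : ∀ ε : ℝ, 0 < ε → epsEntropy μ ρ ε ≠ ∞) :
    ∀ ε : ℝ, 0 < ε → ∃ (k : ℕ) (A : Fin (k + 1) → Set X),
      (∀ i, MeasurableSet (A i)) ∧ (⋃ i, A i) = Set.univ ∧
      μ (A 0) < ENNReal.ofReal ε ∧
      ∀ i, i ≠ 0 → essDiam μ ρ (A i) < ENNReal.ofReal ε := by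
  intro ε hε
  have h := h2 (ε / 2) (by linarith)
  have hne : {h : ℝ≥0∞ | ∃ k : ℕ, IsEpsCover μ ρ (ε / 2) k ∧
      h = ENNReal.ofReal (Real.logb 2 k)}.Nonempty := by
    by_contra hn
    rw [Set.not_nonempty_iff_eq_empty] at hn
    rw [epsEntropy, hn, sInf_empty] at h
    exact h rfl
  obtain ⟨_, k, ⟨A, hAm, hAu, hA0, hdiam⟩, _⟩ := hne
  refine ⟨k, A, hAm, hAu,
    lt_of_lt_of_le hA0 (ENNReal.ofReal_le_ofReal (by linarith)), ?_⟩
  intro i hi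
  have hbound : essDiam μ ρ (A i) ≤ ENNReal.ofReal (ε / 2) := by
    rw [essDiam]
    refine essSup_le_of_ae_le _ ?_
    rw [Measure.prod_restrict]
    filter_upwards [ae_restrict_mem ((hAm i).prod (hAm i))] with p hp
    exact ENNReal.ofReal_le_ofReal (le_of_lt (hdiam i hi p.1 hp.1 p.2 hp.2))
  exact lt_of_le_of_lt hbound
    ((ENNReal.ofReal_lt_ofReal_iff hε).mpr (by linarith))

end Impl2

section Impl3
variable {X : Type*} [MeasurableSpace X] (μ : Measure X) [IsProbabilityMeasure μ]
  (ρ : X → X → ℝ)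

lemma impl_4_5 (hmeas : Measurable (Function.uncurry ρ))
    (h4 : ∀ ε : ℝ, 0 < ε → ∃ (k : ℕ) (A : Fin (k + 1) → Set X),
      (∀ i, MeasurableSet (A i)) ∧ (⋃ i, A i) = Set.univ ∧
      μ (A 0) < ENNReal.ofReal ε ∧
      ∀ i, i ≠ 0 → essDiam μ ρ (A i) < ENNReal.ofReal ε) :
    ∀ A : Set X, MeasurableSet A → 0 < μ A →
      essInf (fun p : X × X => ENNReal.ofReal (ρ p.1 p.2))
        ((μ.restrict A).prod (μ.restrict A)) = 0 := by
  intro A hA hApos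
  set f : X × X → ℝ≥0∞ := fun p => ENNReal.ofReal (ρ p.1 p.2) with hf
  set ν := (μ.restrict A).prod (μ.restrict A) with hν
  have key : ∀ r : ℝ, 0 < r → essInf f ν ≤ ENNReal.ofReal r := by
    intro r hr
    set ε0 : ℝ := min r ((μ A).toReal) with hε0
    have hε0pos : 0 < ε0 :=
      lt_min hr (ENNReal.toReal_pos hApos.ne' (measure_ne_top μ A))
    obtain ⟨k, As, hAsm, hAsu, hAs0, hdiam⟩ := h4 ε0 hε0pos
    have hofA : ENNReal.ofReal ε0 ≤ μ A := by
      rw [← ENNReal.ofReal_toReal (measure_ne_top μ A)]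
      exact ENNReal.ofReal_le_ofReal (min_le_right _ _)
    have h1 : μ (A \ As 0) ≠ 0 := by
      intro h0
      have hle : μ A ≤ μ (As 0) := by
        calc μ A ≤ μ ((A ∩ As 0) ∪ (A \ As 0)) := by
              refine measure_mono fun x hx => ?_
              by_cases hx0 : x ∈ As 0 <;> simp [hx, hx0]
          _ ≤ μ (A ∩ As 0) + μ (A \ As 0) := measure_union_le _ _
          _ = μ (A ∩ As 0) := by rw [h0, add_zero]
          _ ≤ μ (As 0) := measure_mono inter_subset_right
      exact absurd (lt_of_le_of_lt (hofA.trans hle) hAs0) (lt_irrefl _)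
    have h2 : ∃ i : Fin (k + 1), i ≠ 0 ∧ μ ((A \ As 0) ∩ As i) ≠ 0 := by
      by_contra hcon
      push_neg at hcon
      have hzero : ∀ i : Fin (k + 1), μ ((A \ As 0) ∩ As i) = 0 := by
        intro i
        by_cases hi : i = 0
        · subst hi
          have : (A \ As 0) ∩ As 0 = ∅ := by
            ext x; simp
          simp [this]
        · exact hcon i hi
      have : A \ As 0 = ⋃ i, (A \ As 0) ∩ As i := by
        rw [← inter_iUnion, hAsu, inter_univ]
      rw [this] at h1
      exact h1 (measure_iUnion_null hzero)
    obtain ⟨i, hi, hBpos⟩ := h2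
    set B := (A \ As 0) ∩ As i with hBdef
    have hBA : B ⊆ A := fun x hx => hx.1.1
    have hBAs : B ⊆ As i := fun x hx => hx.2
    have hBm : MeasurableSet B := ((hA.diff (hAsm 0)).inter (hAsm i))
    have hbadm : MeasurableSet {p : X × X | ENNReal.ofReal r ≤ f p} := by
      refine measurableSet_le measurable_const ?_
      exact (ENNReal.measurable_ofReal.comp hmeas)
    have haei : (μ.restrict (As i)).prod (μ.restrict (As i)) {p | ENNReal.ofReal r ≤ f p} = 0 := by
      have hlt : essDiam μ ρ (As i) < ENNReal.ofReal r :=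
        lt_of_lt_of_le (hdiam i hi)
          (ENNReal.ofReal_le_ofReal (min_le_left _ _))
      have := ae_lt_of_essSup_lt (f := f)
        (μ := (μ.restrict (As i)).prod (μ.restrict (As i))) hlt
      rw [ae_iff] at this
      simpa [not_lt] using this
    have hμB : (μ.restrict B).prod (μ.restrict B) {p | ENNReal.ofReal r ≤ f p} = 0 := by
      rw [Measure.prod_restrict, Measure.restrict_apply hbadm]
      rw [Measure.prod_restrict, Measure.restrict_apply hbadm] at haei
      refine measure_mono_null ?_ haei
      exact inter_subset_inter_right _ (prod_mono hBAs hBAs)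
    have hprodB : (μ.restrict B).prod (μ.restrict B) = ν.restrict (B ×ˢ B) := by
      rw [hν, ← Measure.prod_restrict]
      congr 1 <;>
        rw [Measure.restrict_restrict hBm, inter_eq_left.mpr hBA]
    have hμ'ne : (μ.restrict B).prod (μ.restrict B) ≠ 0 := by
      intro h0
      have : (μ.restrict B).prod (μ.restrict B) Set.univ = 0 := by rw [h0]; rfl
      rw [← Set.univ_prod_univ, Measure.prod_prod, Measure.restrict_apply MeasurableSet.univ,
        Set.univ_inter] at this
      exact hBpos (by
        rcases mul_eq_zero.mp this with h | h <;> exact h)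
    have hstep1 : essInf f ν ≤ essInf f ((μ.restrict B).prod (μ.restrict B)) := by
      refine essInf_antitone_measure ?_
      rw [hprodB]
      exact (Measure.restrict_le_self).absolutelyContinuous
    have hstep2 : essInf f ((μ.restrict B).prod (μ.restrict B)) ≤ ENNReal.ofReal r := by
      have hae : ∀ᵐ p ∂((μ.restrict B).prod (μ.restrict B)), f p ≤ ENNReal.ofReal r := by
        rw [ae_iff]
        refine measure_mono_null ?_ hμB
        intro p hp
        exact le_of_lt (not_le.mp hp)
      calc essInf f ((μ.restrict B).prod (μ.restrict B))
          ≤ essInf (fun _ => ENNReal.ofReal r) ((μ.restrict B).prod (μ.restrict B)) :=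
            essInf_mono_ae hae
        _ = ENNReal.ofReal r := essInf_const _ hμ'ne
    exact hstep1.trans hstep2
  refine le_antisymm ?_ (zero_le)
  refine ENNReal.le_of_forall_pos_le_add fun δ hδ _ => ?_
  rw [zero_add]
  calc essInf f ν ≤ ENNReal.ofReal (δ : ℝ) := key δ (by exact_mod_cast hδ)
    _ = (δ : ℝ≥0∞) := ENNReal.ofReal_coe_nnreal

lemma impl_5_3 (hmeas : Measurable (Function.uncurry ρ))
    (h5 : ∀ A : Set X, MeasurableSet A → 0 < μ A →
      essInf (fun p : X × X => ENNReal.ofReal (ρ p.1 p.2))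
        ((μ.restrict A).prod (μ.restrict A)) = 0) :
    ∀ᵐ x ∂μ, ∀ ε : ℝ, 0 < ε → 0 < μ {y | ρ x y < ε} := by
  have hNn : ∀ n : ℕ, μ {x | μ {y | ρ x y < 1 / ((n : ℝ) + 1)} = 0} = 0 := by
    intro n
    set r : ℝ := 1 / ((n : ℝ) + 1) with hrdef
    have hrpos : 0 < r := by positivity
    set Nn := {x | μ {y | ρ x y < r} = 0} with hNdef
    have hNm : MeasurableSet Nn := by
      have := aux_measure_ball_measurable (μ := μ) hmeas r
      exact this (measurableSet_singleton 0)
    by_contra hpos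
    have h0 : 0 < μ Nn := pos_iff_ne_zero.mpr hpos
    have hinf := h5 Nn hNm h0
    set ν := μ.restrict Nn with hν
    have hsm : MeasurableSet {p : X × X | ρ p.1 p.2 < r} :=
      measurableSet_lt hmeas measurable_const
    have hset : (ν.prod ν) {p : X × X | ρ p.1 p.2 < r} ≠ 0 := by
      intro hz
      have hae : ∀ᵐ p ∂(ν.prod ν),
          ENNReal.ofReal r ≤ ENNReal.ofReal (ρ p.1 p.2) := by
        rw [ae_iff]
        refine measure_mono_null ?_ hz
        intro p hp
        simp only [mem_setOf_eq, not_le] at hp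
        exact (ENNReal.ofReal_lt_ofReal_iff hrpos).mp hp
      have := le_essInf_of_ae_le _ hae
      rw [hinf] at this
      simp only [nonpos_iff_eq_zero, ENNReal.ofReal_eq_zero] at this
      linarith
    have hfub : (ν.prod ν) {p : X × X | ρ p.1 p.2 < r}
        = ∫⁻ x, ν {y | ρ x y < r} ∂ν := by
      rw [Measure.prod_apply hsm]
      rfl
    have hzero : ∀ᵐ x ∂ν, ν {y | ρ x y < r} = 0 := by
      filter_upwards [ae_restrict_mem hNm] with x hx
      have hx0 : μ {y | ρ x y < r} = 0 := hx
      exact le_antisymm ((Measure.restrict_le_self _).trans_eq hx0) (zero_le)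
    rw [hfub, lintegral_congr_ae hzero, lintegral_zero] at hset
    exact hset rfl
  have hae : ∀ᵐ x ∂μ, ∀ n : ℕ, μ {y | ρ x y < 1 / ((n : ℝ) + 1)} ≠ 0 := by
    rw [ae_all_iff]
    intro n
    rw [ae_iff]
    simpa using hNn n
  filter_upwards [hae] with x hx ε hε
  obtain ⟨n, hn⟩ := exists_nat_one_div_lt hε
  have hsub : {y | ρ x y < 1 / ((n : ℝ) + 1)} ⊆ {y | ρ x y < ε} :=
    fun y hy => lt_trans hy hn
  exact lt_of_lt_of_le (pos_iff_ne_zero.mpr (hx n)) (measure_mono hsub)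

end Impl3
/-- equivalent characterizations of admissibility of a measurable
semimetric `ρ` on a standard probability space `(X, μ)`:
(1) separability on a set of full measure; (2) finiteness of the `ε`-entropy for all
`ε > 0`; (4) almost all `ε`-balls have positive measure; (5) covers by a set of small
measure and finitely many sets of small essential diameter; (6) the essential infimum of
`ρ` on `A × A` vanishes for every set `A` of positive measure. -/
theorem statement2 {X : Type*} [MeasurableSpace X] [StandardBorelSpace X]
    (μ : Measure X) [IsProbabilityMeasure μ] (ρ : X → X → ℝ)
    (hρ : IsSemimetric ρ) (hmeas : Measurable (Function.uncurry ρ)) :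
    List.TFAE
      [ ∃ S : Set X, MeasurableSet S ∧ μ Sᶜ = 0 ∧ SeparableOn ρ S,
        ∀ ε : ℝ, 0 < ε → epsEntropy μ ρ ε ≠ ∞,
        ∀ᵐ x ∂μ, ∀ ε : ℝ, 0 < ε → 0 < μ {y | ρ x y < ε},
        ∀ ε : ℝ, 0 < ε → ∃ (k : ℕ) (A : Fin (k + 1) → Set X),
          (∀ i, MeasurableSet (A i)) ∧ (⋃ i, A i) = Set.univ ∧
          μ (A 0) < ENNReal.ofReal ε ∧
          ∀ i, i ≠ 0 → essDiam μ ρ (A i) < ENNReal.ofReal ε,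
        ∀ A : Set X, MeasurableSet A → 0 < μ A →
          essInf (fun p : X × X => ENNReal.ofReal (ρ p.1 p.2))
            ((μ.restrict A).prod (μ.restrict A)) = 0 ] := by
  tfae_have 1 → 2 := impl_1_2 μ ρ hρ hmeas
  tfae_have 2 → 4 := impl_2_4 μ ρ hmeas
  tfae_have 4 → 5 := impl_4_5 μ ρ hmeas
  tfae_have 5 → 3 := impl_5_3 μ ρ hmeas
  tfae_have 3 → 1 := impl_3_1 μ ρ hρ hmeas
  tfae_finish
end

section
/- Let (Y, μ) be a probability space, let p be a measurable semimetric on Y, and let ε>0. If ∫∫_{Y×Y} p dμdμ < ε²/2, then there exist disjoint measurable sets Y₀, Y₁ with Y₀ ∪ Y₁ = Y such that μ(Y₀) ≤ ε and diam_p(Y₁) ≤ ε (i.e., p(x,y) ≤ ε for all x,y ∈ Y₁). -/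
open MeasureTheory Filter Function Set
open scoped ENNReal

/-- if the double integral of a measurable semimetric `p` on a probability
space `(Y, μ)` is less than `ε²/2`, then `Y` splits into disjoint measurable sets `Y₀, Y₁`
with `μ(Y₀) ≤ ε` and `diam_p(Y₁) ≤ ε`. -/
theorem statement3 {Y : Type*} [MeasurableSpace Y] (μ : Measure Y) [IsProbabilityMeasure μ]
    (p : Y → Y → ℝ) (hp : IsSemimetric p) (hpmeas : Measurable (Function.uncurry p))
    (ε : ℝ) (hε : 0 < ε)
    (hint : ∫⁻ q, ENNReal.ofReal (p q.1 q.2) ∂(μ.prod μ) < ENNReal.ofReal (ε ^ 2 / 2)) :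
    ∃ Y₀ Y₁ : Set Y, MeasurableSet Y₀ ∧ MeasurableSet Y₁ ∧ Disjoint Y₀ Y₁ ∧
      Y₀ ∪ Y₁ = Set.univ ∧ μ Y₀ ≤ ENNReal.ofReal ε ∧ ∀ x ∈ Y₁, ∀ y ∈ Y₁, p x y ≤ ε := by
  obtain ⟨hnn, hrefl, hsymm, htri⟩ := hp
  set F : Y → ℝ≥0∞ := fun x => ∫⁻ y, ENNReal.ofReal (p x y) ∂μ with hF
  have hmeasF : Measurable F := by
    apply Measurable.lintegral_prod_right
    exact (ENNReal.measurable_ofReal.comp hpmeas)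
  have hFint : ∫⁻ x, F x ∂μ < ENNReal.ofReal (ε ^ 2 / 2) := by
    have heq := MeasureTheory.lintegral_prod (μ := μ) (ν := μ) (fun q : Y × Y => ENNReal.ofReal (p q.1 q.2))
      (hpmeas.ennreal_ofReal.aemeasurable)
    rw [hF, ← heq]
    exact hint
  set Y₀ : Set Y := {x | ENNReal.ofReal (ε / 2) ≤ F x} with hY0
  have hmY0 : MeasurableSet Y₀ := measurableSet_le measurable_const hmeasF
  have hhalf : (0:ℝ) < ε / 2 := by linarith
  have hμY0 : μ Y₀ ≤ ENNReal.ofReal ε := by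
    have hm := MeasureTheory.meas_ge_le_lintegral_div (μ := μ) hmeasF.aemeasurable
      (ENNReal.ofReal_pos.mpr hhalf).ne' ENNReal.ofReal_ne_top
    calc μ Y₀ ≤ (∫⁻ x, F x ∂μ) / ENNReal.ofReal (ε / 2) := hm
      _ ≤ ENNReal.ofReal (ε ^ 2 / 2) / ENNReal.ofReal (ε / 2) := by
          exact ENNReal.div_le_div_right hFint.le _
      _ = ENNReal.ofReal ((ε ^ 2 / 2) / (ε / 2)) := by
          rw [ENNReal.ofReal_div_of_pos hhalf]
      _ = ENNReal.ofReal ε := by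
          congr 1; field_simp
  refine ⟨Y₀, Y₀ᶜ, hmY0, hmY0.compl, disjoint_compl_right, union_compl_self _, hμY0, ?_⟩
  intro x hx y hy
  have hFx : F x < ENNReal.ofReal (ε / 2) := lt_of_not_ge hx
  have hFy : F y < ENNReal.ofReal (ε / 2) := lt_of_not_ge hy
  have key : ENNReal.ofReal (p x y) ≤ F x + F y := by
    have h1 : ENNReal.ofReal (p x y) = ∫⁻ _, ENNReal.ofReal (p x y) ∂μ := by
      simp [lintegral_const]
    rw [h1]
    have h2 : ∀ z, ENNReal.ofReal (p x y) ≤ ENNReal.ofReal (p x z) + ENNReal.ofReal (p z y) := by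
      intro z
      rw [← ENNReal.ofReal_add (hnn x z) (hnn z y)]
      exact ENNReal.ofReal_le_ofReal (htri x z y)
    calc ∫⁻ _, ENNReal.ofReal (p x y) ∂μ
        ≤ ∫⁻ z, (ENNReal.ofReal (p x z) + ENNReal.ofReal (p z y)) ∂μ :=
          lintegral_mono h2
      _ = F x + F y := by
          rw [lintegral_add_left (by
            exact ENNReal.measurable_ofReal.comp (hpmeas.comp (measurable_const.prodMk measurable_id)))]
          congr 1
          simp only [hF]
          congr 1
          ext z
          rw [hsymm z y]
  have : ENNReal.ofReal (p x y) < ENNReal.ofReal ε := by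
    calc ENNReal.ofReal (p x y) ≤ F x + F y := key
      _ < ENNReal.ofReal (ε / 2) + ENNReal.ofReal (ε / 2) :=
          ENNReal.add_lt_add hFx hFy
      _ = ENNReal.ofReal ε := by
          rw [← ENNReal.ofReal_add hhalf.le hhalf.le]; norm_num
  exact ((ENNReal.ofReal_lt_ofReal_iff hε).mp this).le
end

section
/- Let (X, μ) be a standard Borel probability space. The space 𝕄 = {f ∈ L¹(X×X, μ×μ) : ‖f‖_m < ∞}, equipped with the m-norm, is complete: every sequence in 𝕄 that is Cauchy with respect to the m-norm converges in the m-norm to an element of 𝕄. -/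
open MeasureTheory Filter Function Set
open scoped ENNReal

lemma mnorm_le_of_dominates {X : Type*} [MeasurableSpace X] (μ : Measure X)
    (f : X → X → ℝ) (ρ : X → X → ℝ) (h1 : IsSemimetric ρ)
    (h2 : Measurable (Function.uncurry ρ))
    (h3 : ∀ᵐ p ∂(μ.prod μ), |f p.1 p.2| ≤ ρ p.1 p.2) :
    mnorm μ f ≤ ∫⁻ p, ENNReal.ofReal (ρ p.1 p.2) ∂(μ.prod μ) :=
  sInf_le ⟨ρ, h1, h2, h3, rfl⟩

lemma exists_semimetric_of_mnorm_lt {X : Type*} [MeasurableSpace X] {μ : Measure X}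
    {f : X → X → ℝ} {c : ℝ≥0∞} (h : mnorm μ f < c) :
    ∃ ρ : X → X → ℝ, IsSemimetric ρ ∧ Measurable (Function.uncurry ρ) ∧
      (∀ᵐ p ∂(μ.prod μ), |f p.1 p.2| ≤ ρ p.1 p.2) ∧
      ∫⁻ p, ENNReal.ofReal (ρ p.1 p.2) ∂(μ.prod μ) < c := by
  obtain ⟨a, ⟨ρ, h1, h2, h3, rfl⟩, hac⟩ := sInf_lt_iff.mp h
  exact ⟨ρ, h1, h2, h3, hac⟩

lemma IsSemimetric.add {X : Type*} {ρ τ : X → X → ℝ}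
    (hρ : IsSemimetric ρ) (hτ : IsSemimetric τ) :
    IsSemimetric (fun x y => ρ x y + τ x y) := by
  obtain ⟨h1, h2, h3, h4⟩ := hρ
  obtain ⟨g1, g2, g3, g4⟩ := hτ
  refine ⟨fun x y => add_nonneg (h1 x y) (g1 x y), fun x => by simp [h2, g2],
    fun x y => by simp only []; rw [h3, g3], fun x y z => ?_⟩
  simp only []
  have := h4 x y z; have := g4 x y z; linarith

lemma summable_of_tsum_ofReal_ne_top {S : ℕ → ℝ} (h0 : ∀ j, 0 ≤ S j)
    (h : ∑' j, ENNReal.ofReal (S j) ≠ ∞) : Summable S := by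
  have h1 : Summable (fun j => (S j).toNNReal) := by
    refine ENNReal.tsum_coe_ne_top_iff_summable.mp ?_
    simpa [ENNReal.ofReal] using h
  have h2 : Summable (fun j => ((S j).toNNReal : ℝ)) := NNReal.summable_coe.mpr h1
  refine h2.congr fun j => Real.coe_toNNReal _ (h0 j)

/-- the space `𝕄 = {f ∈ L¹(X×X, μ×μ) : ‖f‖_m < ∞}` is complete in the
m-norm: every Cauchy sequence in `𝕄` converges in the m-norm to an element of `𝕄`. -/
theorem statement4 {X : Type*} [MeasurableSpace X] [StandardBorelSpace X]
    (μ : Measure X) [IsProbabilityMeasure μ] (f : ℕ → X → X → ℝ)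
    (hint : ∀ n, Integrable (Function.uncurry (f n)) (μ.prod μ))
    (hfin : ∀ n, mnorm μ (f n) ≠ ∞)
    (hcauchy : ∀ ε : ℝ≥0∞, 0 < ε → ∃ N : ℕ, ∀ m ≥ N, ∀ n ≥ N, mdist μ (f m) (f n) < ε) :
    ∃ g : X → X → ℝ, Integrable (Function.uncurry g) (μ.prod μ) ∧ mnorm μ g ≠ ∞ ∧
      Tendsto (fun n => mdist μ (f n) g) atTop (nhds 0) := by
  have hpow : ∀ k : ℕ, (0:ℝ≥0∞) < 2⁻¹ ^ k := by
    intro k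
    refine ENNReal.pow_pos (ENNReal.inv_pos.mpr (by norm_num)) k
  choose N hN using fun k => hcauchy (2⁻¹ ^ k) (hpow k)
  -- the subsequence indices
  set n : ℕ → ℕ := fun k => Nat.rec (N 0) (fun k ih => max ih (N (k+1))) k with hn_def
  have hn_succ : ∀ k, n (k+1) = max (n k) (N (k+1)) := fun k => rfl
  have hn_ge : ∀ k, N k ≤ n k := by
    intro k; cases k with
    | zero => exact le_refl _
    | succ k => rw [hn_succ]; exact le_max_right _ _
  have hn_mono : ∀ k, n k ≤ n (k+1) := fun k => le_max_left _ _
  have hstep : ∀ k, mdist μ (f (n k)) (f (n (k+1))) < 2⁻¹ ^ k :=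
    fun k => hN k _ (hn_ge k) _ (le_trans (hn_ge k) (hn_mono k))
  choose ρ hρ_sm hρ_meas hρ_dom hρ_int using fun k =>
    exists_semimetric_of_mnorm_lt (hstep k)
  -- eρ and σ
  set eρ : ℕ → X × X → ℝ≥0∞ := fun k p => ENNReal.ofReal (ρ k p.1 p.2) with heρ_def
  have heρ_meas : ∀ k, Measurable (eρ k) := fun k => (hρ_meas k).ennreal_ofReal
  set σ : ℕ → X × X → ℝ≥0∞ := fun k p => ∑' j, eρ (k + j) p with hσ_def
  have hσ_meas : ∀ k, Measurable (σ k) := fun k =>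
    Measurable.ennreal_tsum (fun j => heρ_meas (k + j))
  have hσ_diag : ∀ k x, σ k (x, x) = 0 := by
    intro k x
    simp only [hσ_def, heρ_def, (hρ_sm _).2.1 x, ENNReal.ofReal_zero, tsum_zero]
  have hσ_symm : ∀ k x y, σ k (x, y) = σ k (y, x) := by
    intro k x y
    simp only [hσ_def, heρ_def]
    exact tsum_congr fun j => by rw [(hρ_sm _).2.2.1 x y]
  have hσ_tri : ∀ k x y z, σ k (x, z) ≤ σ k (x, y) + σ k (y, z) := by
    intro k x y z
    simp only [hσ_def, heρ_def]
    rw [← ENNReal.tsum_add]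
    refine ENNReal.tsum_le_tsum fun j => ?_
    rw [← ENNReal.ofReal_add ((hρ_sm _).1 _ _) ((hρ_sm _).1 _ _)]
    exact ENNReal.ofReal_le_ofReal ((hρ_sm _).2.2.2 x y z)
  have hσ_le : ∀ k p, σ k p ≤ σ 0 p := by
    intro k p
    simp only [hσ_def]
    have : ∀ j, eρ (k + j) p = (fun i => eρ i p) ((k + ·) j) := fun j => rfl
    calc ∑' j, eρ (k + j) p = ∑' j, (fun i => eρ i p) ((k + ·) j) := rfl
    _ ≤ ∑' i, eρ i p := ENNReal.tsum_comp_le_tsum_of_injective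
        (fun a b h => by omega) _
    _ = ∑' i, eρ (0 + i) p := by simp
  have hσ_int : ∀ k, ∫⁻ p, σ k p ∂(μ.prod μ) ≤ 2⁻¹ ^ k * 2 := by
    intro k
    rw [hσ_def]
    simp only []
    rw [lintegral_tsum (fun j => (heρ_meas (k + j)).aemeasurable)]
    calc ∑' j, ∫⁻ p, eρ (k + j) p ∂(μ.prod μ)
        ≤ ∑' j : ℕ, 2⁻¹ ^ (k + j) := ENNReal.tsum_le_tsum fun j => (hρ_int (k + j)).le
      _ = ∑' j : ℕ, 2⁻¹ ^ k * 2⁻¹ ^ j := by simp [pow_add]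
      _ = 2⁻¹ ^ k * ∑' j : ℕ, 2⁻¹ ^ j := ENNReal.tsum_mul_left
      _ ≤ 2⁻¹ ^ k * 2 := by
          rw [ENNReal.tsum_geometric]
          gcongr
          rw [ENNReal.one_sub_inv_two, inv_inv]
  -- choose base point
  have hσ0_fin_ae : ∀ᵐ p ∂(μ.prod μ), σ 0 p < ∞ := by
    refine ae_lt_top (hσ_meas 0) (ne_top_of_le_ne_top ?_ (hσ_int 0))
    simp [ENNReal.mul_ne_top]
  obtain ⟨x₀, hx₀⟩ := (Measure.ae_ae_of_ae_prod hσ0_fin_ae).exists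
  set B : Set X := {y | σ 0 (x₀, y) ≠ ∞} with hB_def
  have hB_meas : MeasurableSet B := by
    have : Measurable (fun y => σ 0 (x₀, y)) := (hσ_meas 0).comp measurable_prodMk_left
    exact (this (measurableSet_singleton ∞)).compl
  have hB_ae : ∀ᵐ y ∂μ, y ∈ B := hx₀.mono fun y hy => hy.ne
  set r : X → X := fun x => if x ∈ B then x else x₀ with hr_def
  have hr_meas : Measurable r := Measurable.ite hB_meas measurable_id measurable_const
  have hrB : ∀ x, σ 0 (x₀, r x) ≠ ∞ := by
    intro x
    by_cases h : x ∈ B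
    · simp only [hr_def, if_pos h]; exact h
    · simp only [hr_def, if_neg h, hσ_diag]; exact ENNReal.zero_ne_top
  have hrid : ∀ x ∈ B, r x = x := fun x h => if_pos h
  have hσr_fin : ∀ k x y, σ k (r x, r y) ≠ ∞ := by
    intro k x y
    refine ne_top_of_le_ne_top ?_ (le_trans (hσ_le k _) (hσ_tri 0 (r x) x₀ (r y)))
    rw [hσ_symm 0 (r x) x₀]
    exact ENNReal.add_ne_top.mpr ⟨hrB x, hrB y⟩
  set D : ℕ → X → X → ℝ := fun k x y => (σ k (r x, r y)).toReal with hD_def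
  have hD_sm : ∀ k, IsSemimetric (D k) := by
    intro k
    refine ⟨fun x y => ENNReal.toReal_nonneg, fun x => by simp [hD_def, hσ_diag],
      fun x y => by simp only [hD_def]; rw [hσ_symm], fun x y z => ?_⟩
    simp only [hD_def]
    rw [← ENNReal.toReal_add (hσr_fin k x y) (hσr_fin k y z)]
    exact ENNReal.toReal_mono (ENNReal.add_ne_top.mpr ⟨hσr_fin k x y, hσr_fin k y z⟩)
      (hσ_tri k _ _ _)
  have hD_meas : ∀ k, Measurable (Function.uncurry (D k)) := by
    intro k
    exact ((hσ_meas k).comp ((hr_meas.comp measurable_fst).prodMk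
      (hr_meas.comp measurable_snd))).ennreal_toReal
  have hBc : μ Bᶜ = 0 := by
    rw [ae_iff] at hB_ae
    simpa [Set.compl_def] using hB_ae
  have hBB : ∀ᵐ p ∂(μ.prod μ), p.1 ∈ B ∧ p.2 ∈ B := by
    have h1 : ∀ᵐ p ∂(μ.prod μ), p.1 ∈ B := by
      rw [ae_iff]
      have : {p : X × X | ¬ p.1 ∈ B} = Bᶜ ×ˢ (univ : Set X) := by
        ext p; simp [Set.mem_prod]
      rw [this, Measure.prod_prod]
      simp [hBc]
    have h2 : ∀ᵐ p ∂(μ.prod μ), p.2 ∈ B := by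
      rw [ae_iff]
      have : {p : X × X | ¬ p.2 ∈ B} = (univ : Set X) ×ˢ Bᶜ := by
        ext p; simp [Set.mem_prod]
      rw [this, Measure.prod_prod]
      simp [hBc]
    exact h1.and h2
  have hD_int : ∀ k, ∫⁻ p, ENNReal.ofReal (D k p.1 p.2) ∂(μ.prod μ) ≤ 2⁻¹ ^ k * 2 := by
    intro k
    refine le_trans (lintegral_mono_ae (hBB.mono fun p hp => ?_)) (hσ_int k)
    simp only [hD_def]
    rw [hrid _ hp.1, hrid _ hp.2]
    exact ENNReal.ofReal_toReal_le
  -- the limit function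
  set G : X → X → ℝ := fun x y => f (n 0) x y + ∑' j, (f (n (j+1)) x y - f (n j) x y)
    with hG_def
  have hdom_ae : ∀ᵐ p ∂(μ.prod μ), ∀ j, |f (n j) p.1 p.2 - f (n (j+1)) p.1 p.2| ≤
      ρ j p.1 p.2 := ae_all_iff.mpr hρ_dom
  -- key pointwise facts on the good set
  have key : ∀ p : X × X, p.1 ∈ B → p.2 ∈ B →
      (∀ j, |f (n j) p.1 p.2 - f (n (j+1)) p.1 p.2| ≤ ρ j p.1 p.2) →
      Tendsto (fun m => f (n m) p.1 p.2) atTop (nhds (G p.1 p.2)) ∧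
      ∀ k, |f (n k) p.1 p.2 - G p.1 p.2| ≤ D k p.1 p.2 := by
    intro p hp1 hp2 hdom
    set a : ℕ → ℝ := fun j => f (n j) p.1 p.2 with ha_def
    set Δ : ℕ → ℝ := fun j => a (j+1) - a j with hΔ_def
    set S : ℕ → ℝ := fun j => |Δ j| with hS_def
    have hS_nonneg : ∀ j, 0 ≤ S j := fun j => abs_nonneg _
    have hS_le : ∀ j, S j ≤ ρ j p.1 p.2 := by
      intro j
      rw [hS_def]
      simp only [hΔ_def, ha_def]
      rw [abs_sub_comm]
      exact hdom j
    have hσp_eq : ∀ k, σ k (r p.1, r p.2) = σ k p := by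
      intro k; rw [hrid _ hp1, hrid _ hp2]
    have htail_fin : ∀ k, ∑' j, ENNReal.ofReal (S (k + j)) ≠ ∞ := by
      intro k
      have hfin' : σ k p ≠ ∞ := by rw [← hσp_eq k]; exact hσr_fin k p.1 p.2
      refine ne_top_of_le_ne_top hfin' ?_
      refine ENNReal.tsum_le_tsum fun j => ?_
      simp only [heρ_def]
      exact ENNReal.ofReal_le_ofReal (hS_le (k + j))
    have htail_sum : ∀ k, Summable (fun j => S (k + j)) := fun k =>
      summable_of_tsum_ofReal_ne_top (fun j => hS_nonneg _) (htail_fin k)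
    have hΔ_sum : Summable Δ := by
      refine Summable.of_abs ?_
      have := htail_sum 0
      simpa using this
    have htend : Tendsto (fun m => a m) atTop (nhds (G p.1 p.2)) := by
      have h1 : Tendsto (fun m => ∑ j ∈ Finset.range m, Δ j) atTop (nhds (∑' j, Δ j)) :=
        hΔ_sum.hasSum.tendsto_sum_nat
      have h2 : ∀ m, a m = a 0 + ∑ j ∈ Finset.range m, Δ j := by
        intro m
        rw [Finset.sum_range_sub (fun j => a j) m]
        ring
      have h3 : G p.1 p.2 = a 0 + ∑' j, Δ j := rfl
      rw [h3]
      exact ((tendsto_const_nhds.add h1).congr (fun m => (h2 m).symm))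
    refine ⟨htend, fun k => ?_⟩
    -- tail bound
    have htsum_le : ∑' j, S (k + j) ≤ D k p.1 p.2 := by
      have h1 : ENNReal.ofReal (∑' j, S (k + j)) ≤ σ k (r p.1, r p.2) := by
        rw [ENNReal.ofReal_tsum_of_nonneg (fun j => hS_nonneg _) (htail_sum k), hσp_eq k]
        refine ENNReal.tsum_le_tsum fun j => ENNReal.ofReal_le_ofReal (hS_le (k + j))
      have h2 : ∑' j, S (k + j) = (ENNReal.ofReal (∑' j, S (k + j))).toReal :=
        (ENNReal.toReal_ofReal (tsum_nonneg fun j => hS_nonneg _)).symm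
      rw [h2, hD_def]
      exact ENNReal.toReal_mono (hσr_fin k p.1 p.2) h1
    have hbound : ∀ m, k ≤ m → |a k - a m| ≤ ∑' j, S (k + j) := by
      intro m hkm
      have h1 : a m - a k = ∑ i ∈ Finset.range (m - k), Δ (k + i) := by
        have h0 := Finset.sum_range_sub (fun i => a (k + i)) (m - k)
        calc a m - a k = a (k + (m - k)) - a (k + 0) := by
              have hm : k + (m - k) = m := by omega
              simp [hm]
          _ = ∑ i ∈ Finset.range (m - k), (a (k + (i + 1)) - a (k + i)) := h0.symm
          _ = ∑ i ∈ Finset.range (m - k), Δ (k + i) := by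
              refine Finset.sum_congr rfl fun i _ => ?_
              simp only [hΔ_def]
              rw [Nat.add_assoc]
      rw [abs_sub_comm, h1]
      calc |∑ i ∈ Finset.range (m - k), Δ (k + i)|
          ≤ ∑ i ∈ Finset.range (m - k), S (k + i) := Finset.abs_sum_le_sum_abs _ _
        _ ≤ ∑' j, S (k + j) := Summable.sum_le_tsum _ (fun i _ => hS_nonneg _) (htail_sum k)
    have hlim : Tendsto (fun m => |a k - a m|) atTop (nhds (|a k - G p.1 p.2|)) :=
      ((tendsto_const_nhds.sub htend).abs)
    have := le_of_tendsto hlim (eventually_atTop.mpr ⟨k, hbound⟩)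
    exact le_trans this htsum_le
  have hgood : ∀ᵐ p ∂(μ.prod μ),
      Tendsto (fun m => f (n m) p.1 p.2) atTop (nhds (G p.1 p.2)) ∧
      ∀ k, |f (n k) p.1 p.2 - G p.1 p.2| ≤ D k p.1 p.2 := by
    filter_upwards [hBB, hdom_ae] with p hp hd
    exact key p hp.1 hp.2 hd
  have hG_dom : ∀ k, ∀ᵐ p ∂(μ.prod μ), |f (n k) p.1 p.2 - G p.1 p.2| ≤ D k p.1 p.2 :=
    fun k => hgood.mono fun p hp => hp.2 k
  -- integrability of G
  have hG_aesm : AEStronglyMeasurable (Function.uncurry G) (μ.prod μ) := by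
    refine aestronglyMeasurable_of_tendsto_ae atTop (fun m => (hint (n m)).1) ?_
    exact hgood.mono fun p hp => hp.1
  have hF0_fi : ∫⁻ p, ENNReal.ofReal |f (n 0) p.1 p.2| ∂(μ.prod μ) < ⊤ := by
    have h := (hint (n 0)).2
    rw [hasFiniteIntegral_iff_norm] at h
    simpa [Function.uncurry, Real.norm_eq_abs] using h
  have htwo : (2:ℝ≥0∞)⁻¹ ^ 0 * 2 ≠ ⊤ := by simp
  have hG_fi : HasFiniteIntegral (Function.uncurry G) (μ.prod μ) := by
    rw [hasFiniteIntegral_iff_norm]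
    have hb : ∀ᵐ p ∂(μ.prod μ), ENNReal.ofReal ‖Function.uncurry G p‖ ≤
        ENNReal.ofReal |f (n 0) p.1 p.2| + ENNReal.ofReal (D 0 p.1 p.2) := by
      filter_upwards [hG_dom 0] with p hp
      rw [← ENNReal.ofReal_add (abs_nonneg _) ((hD_sm 0).1 _ _)]
      refine ENNReal.ofReal_le_ofReal ?_
      have h2 : |G p.1 p.2| - |f (n 0) p.1 p.2| ≤ |f (n 0) p.1 p.2 - G p.1 p.2| := by
        rw [abs_sub_comm]
        exact abs_sub_abs_le_abs_sub _ _
      have h3 : ‖Function.uncurry G p‖ = |G p.1 p.2| := rfl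
      rw [h3]
      linarith [hp]
    calc ∫⁻ p, ENNReal.ofReal ‖Function.uncurry G p‖ ∂(μ.prod μ)
        ≤ ∫⁻ p, (ENNReal.ofReal |f (n 0) p.1 p.2| +
            ENNReal.ofReal (D 0 p.1 p.2)) ∂(μ.prod μ) := lintegral_mono_ae hb
      _ = ∫⁻ p, ENNReal.ofReal |f (n 0) p.1 p.2| ∂(μ.prod μ) +
          ∫⁻ p, ENNReal.ofReal (D 0 p.1 p.2) ∂(μ.prod μ) :=
          lintegral_add_right' _ ((hD_meas 0).ennreal_ofReal.aemeasurable)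
      _ < ⊤ := ENNReal.add_lt_top.mpr
          ⟨hF0_fi, lt_of_le_of_lt (hD_int 0) (lt_top_iff_ne_top.mpr htwo)⟩
  -- finiteness of mnorm of G
  obtain ⟨τ, hτ_sm, hτ_meas, hτ_dom, hτ_int⟩ :=
    exists_semimetric_of_mnorm_lt (lt_top_iff_ne_top.mpr (hfin (n 0)))
  have hGfin : mnorm μ G ≠ ⊤ := by
    have hdom : ∀ᵐ p ∂(μ.prod μ), |G p.1 p.2| ≤ D 0 p.1 p.2 + τ p.1 p.2 := by
      filter_upwards [hG_dom 0, hτ_dom] with p h1 h2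
      have h3 : |G p.1 p.2| - |f (n 0) p.1 p.2| ≤ |f (n 0) p.1 p.2 - G p.1 p.2| := by
        rw [abs_sub_comm]
        exact abs_sub_abs_le_abs_sub _ _
      linarith
    have hle := mnorm_le_of_dominates μ G (fun x y => D 0 x y + τ x y)
      ((hD_sm 0).add hτ_sm) ((hD_meas 0).add hτ_meas) hdom
    refine ne_top_of_le_ne_top ?_ hle
    have heq : ∀ p : X × X, ENNReal.ofReal (D 0 p.1 p.2 + τ p.1 p.2) =
        ENNReal.ofReal (D 0 p.1 p.2) + ENNReal.ofReal (τ p.1 p.2) :=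
      fun p => ENNReal.ofReal_add ((hD_sm 0).1 _ _) (hτ_sm.1 _ _)
    simp only [heq]
    rw [lintegral_add_right' (fun p : X × X => ENNReal.ofReal (D 0 p.1 p.2))
      (show AEMeasurable (fun p : X × X => ENNReal.ofReal (τ p.1 p.2)) (μ.prod μ) from
        hτ_meas.ennreal_ofReal.aemeasurable)]
    exact ENNReal.add_ne_top.mpr
      ⟨ne_top_of_le_ne_top htwo (hD_int 0), hτ_int.ne⟩
  refine ⟨G, ⟨hG_aesm, hG_fi⟩, hGfin, ?_⟩
  -- convergence in the m-norm
  rw [ENNReal.tendsto_nhds_zero]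
  intro ε hε
  obtain ⟨j, hj⟩ := ENNReal.exists_inv_two_pow_lt hε.ne'
  filter_upwards [eventually_ge_atTop (N (j + 2))] with m hm
  obtain ⟨ρ', h1, h2, h3, h4⟩ :=
    exists_semimetric_of_mnorm_lt (hN (j + 2) m hm (n (j + 2)) (hn_ge (j + 2)))
  have hdom : ∀ᵐ p ∂(μ.prod μ),
      |f m p.1 p.2 - G p.1 p.2| ≤ ρ' p.1 p.2 + D (j + 2) p.1 p.2 := by
    filter_upwards [h3, hG_dom (j + 2)] with p ha hb
    calc |f m p.1 p.2 - G p.1 p.2|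
        ≤ |f m p.1 p.2 - f (n (j + 2)) p.1 p.2| +
          |f (n (j + 2)) p.1 p.2 - G p.1 p.2| := abs_sub_le _ _ _
      _ ≤ ρ' p.1 p.2 + D (j + 2) p.1 p.2 := add_le_add ha hb
  have hle := mnorm_le_of_dominates μ (fun x y => f m x y - G x y)
      (fun x y => ρ' x y + D (j + 2) x y) (h1.add (hD_sm (j + 2)))
      (h2.add (hD_meas (j + 2))) hdom
  have heq : ∀ p : X × X, ENNReal.ofReal (ρ' p.1 p.2 + D (j + 2) p.1 p.2) =
      ENNReal.ofReal (ρ' p.1 p.2) + ENNReal.ofReal (D (j + 2) p.1 p.2) :=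
    fun p => ENNReal.ofReal_add (h1.1 _ _) ((hD_sm (j + 2)).1 _ _)
  have hfinal : mdist μ (f m) G ≤ 2⁻¹ ^ (j + 2) + 2⁻¹ ^ (j + 2) * 2 := by
    refine le_trans hle ?_
    simp only [heq]
    rw [lintegral_add_right' (fun p : X × X => ENNReal.ofReal (ρ' p.1 p.2))
      (show AEMeasurable (fun p : X × X => ENNReal.ofReal (D (j + 2) p.1 p.2)) (μ.prod μ) from
        (hD_meas (j + 2)).ennreal_ofReal.aemeasurable)]
    exact add_le_add h4.le (hD_int (j + 2))
  refine le_trans hfinal (le_trans ?_ hj.le)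
  have e1 : (2:ℝ≥0∞)⁻¹ ^ (j + 2) + 2⁻¹ ^ (j + 2) * 2 = 2⁻¹ ^ j * (2⁻¹ ^ 2 * 3) := by
    ring
  have e2 : ((2:ℝ≥0∞)⁻¹ ^ 2 * 3) ≤ 1 := by
    have h41 : ((2:ℝ≥0∞)⁻¹ ^ 2) = 4⁻¹ := by
      rw [pow_two, ← ENNReal.mul_inv (Or.inl (by norm_num)) (Or.inl (by norm_num))]
      norm_num
    rw [h41]
    calc (4:ℝ≥0∞)⁻¹ * 3 ≤ 4⁻¹ * 4 := by gcongr <;> norm_num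
      _ = 1 := ENNReal.inv_mul_cancel (by norm_num) (by norm_num)
  calc (2:ℝ≥0∞)⁻¹ ^ (j + 2) + 2⁻¹ ^ (j + 2) * 2 = 2⁻¹ ^ j * (2⁻¹ ^ 2 * 3) := e1
    _ ≤ 2⁻¹ ^ j * 1 := by gcongr
    _ = 2⁻¹ ^ j := mul_one _
end

section
/- Let (X, μ) be a standard Borel probability space. Suppose a sequence of measurable semimetrics ρ_n converges to a measurable semimetric ρ in the m-norm (i.e., ‖ρ_n − ρ‖_m → 0), and for every ε>0 the ε-entropy H_ε(ρ_n, μ) is finite for all sufficiently large n. Then ρ is an admissible semimetric. -/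
open MeasureTheory Filter Function Set
open scoped ENNReal

/-- if a sequence of measurable semimetrics `ρ_n` converges to a measurable
semimetric `ρ` in the m-norm, and for every `ε > 0` the `ε`-entropy of `ρ_n` is finite for
all sufficiently large `n`, then `ρ` is an admissible semimetric. -/
theorem statement5 {X : Type*} [MeasurableSpace X] [StandardBorelSpace X]
    (μ : Measure X) [IsProbabilityMeasure μ] (ρn : ℕ → X → X → ℝ) (ρ : X → X → ℝ)
    (hρn : ∀ n, IsSemimetric (ρn n)) (hρnmeas : ∀ n, Measurable (Function.uncurry (ρn n)))
    (hρ : IsSemimetric ρ) (hρmeas : Measurable (Function.uncurry ρ))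
    (hconv : Tendsto (fun n => mdist μ (ρn n) ρ) atTop (nhds 0))
    (hent : ∀ ε : ℝ, 0 < ε → ∃ N : ℕ, ∀ n ≥ N, epsEntropy μ (ρn n) ε ≠ ∞) :
    Admissible μ ρ := by
  classical
  have hXne : Nonempty X :=
    Set.nonempty_iff_univ_nonempty.mpr
      (nonempty_of_measure_ne_zero (by simp : μ Set.univ ≠ 0))
  set e : ℕ → ℝ := fun m => (2 : ℝ)⁻¹ ^ m with he
  have he_pos : ∀ m, 0 < e m := fun m => pow_pos (by norm_num) m
  -- Step 1 : covers and dominating semimetrics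
  have step1 : ∀ m : ℕ, ∃ (t σ : X → X → ℝ) (k : ℕ) (A : Fin (k + 1) → Set X),
      IsSemimetric σ ∧ Measurable (Function.uncurry σ) ∧
      (∀ᵐ p ∂(μ.prod μ), |t p.1 p.2 - ρ p.1 p.2| ≤ σ p.1 p.2) ∧
      (∫⁻ p, ENNReal.ofReal (σ p.1 p.2) ∂(μ.prod μ)) < ENNReal.ofReal (e m * e m) ∧
      (∀ i, MeasurableSet (A i)) ∧ (⋃ i, A i) = Set.univ ∧
      μ (A 0) < ENNReal.ofReal (e m) ∧
      (∀ i, i ≠ 0 → ∀ x ∈ A i, ∀ y ∈ A i, t x y < e m) := by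
    intro m
    obtain ⟨N, hN⟩ := hent (e m) (he_pos m)
    have hev : ∀ᶠ n in atTop, mdist μ (ρn n) ρ < ENNReal.ofReal (e m * e m) :=
      hconv.eventually_lt_const (ENNReal.ofReal_pos.mpr (mul_pos (he_pos m) (he_pos m)))
    obtain ⟨n, hn1, hn2⟩ := (hev.and (eventually_ge_atTop N)).exists
    have hne : {h : ℝ≥0∞ | ∃ k : ℕ, IsEpsCover μ (ρn n) (e m) k ∧
        h = ENNReal.ofReal (Real.logb 2 k)}.Nonempty := by
      by_contra hcon
      rw [Set.not_nonempty_iff_eq_empty] at hcon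
      exact hN n hn2 (by rw [epsEntropy, hcon, sInf_empty])
    obtain ⟨h0, k, hk, -⟩ := hne
    obtain ⟨A, hAm, hAu, hA0, hAd⟩ := hk
    rw [mdist, mnorm] at hn1
    obtain ⟨c, ⟨σ, hs1, hs2, hs3, rfl⟩, hclt⟩ := sInf_lt_iff.mp hn1
    exact ⟨ρn n, σ, k, A, hs1, hs2, hs3, hclt, hAm, hAu, hA0, hAd⟩
  choose t s k A hssemi hsmeas hsae hsint hAmeas hAuniv hA0 hAdiam using step1
  have hsm' : ∀ m, Measurable fun p : X × X => s m p.1 p.2 := fun m => hsmeas m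
  have hms : ∀ m, MeasurableSet {p : X × X | e m < s m p.1 p.2} :=
    fun m => measurableSet_lt measurable_const (hsm' m)
  -- Step 2 : symmetric measurable null exception sets
  have step2 : ∀ m : ℕ, ∃ B : Set (X × X), MeasurableSet B ∧ μ.prod μ B = 0 ∧
      (∀ p : X × X, p ∉ B → |t m p.1 p.2 - ρ p.1 p.2| ≤ s m p.1 p.2) ∧
      (∀ a b : X, (a, b) ∈ B ↔ (b, a) ∈ B) := by
    intro m
    have h0 : μ.prod μ {p : X × X | ¬ |t m p.1 p.2 - ρ p.1 p.2| ≤ s m p.1 p.2} = 0 :=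
      ae_iff.mp (hsae m)
    obtain ⟨B0, hsub, hB0m, hB0⟩ := exists_measurable_superset_of_null h0
    refine ⟨B0 ∪ Prod.swap ⁻¹' B0, hB0m.union (hB0m.preimage measurable_swap), ?_, ?_, ?_⟩
    · refine measure_union_null hB0 ?_
      have hmap : μ.prod μ (Prod.swap ⁻¹' B0) = ((μ.prod μ).map Prod.swap) B0 :=
        (Measure.map_apply measurable_swap hB0m).symm
      rw [hmap, Measure.prod_swap, hB0]
    · intro p hp
      by_contra hcon
      exact hp (Or.inl (hsub hcon))
    · intro a b
      simp only [Set.mem_union, Set.mem_preimage, Prod.swap_prod_mk]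
      tauto
  choose B hBmeas hBnull hBgood hBsymm using step2
  -- the good sets G m and cells C m j
  set G : ℕ → Set X := fun m => {x | μ {y | e m < s m x y} < 2⁻¹} with hG
  have hgmeas : ∀ m, Measurable fun x => μ {y | e m < s m x y} :=
    fun m => measurable_measure_prodMk_left (hms m)
  have hGmeas : ∀ m, MeasurableSet (G m) :=
    fun m => measurableSet_lt (hgmeas m) measurable_const
  set C : (m : ℕ) → Fin (k m + 1) → Set X := fun m j => G m ∩ A m j with hC
  have hCmeas : ∀ m j, MeasurableSet (C m j) := fun m j => (hGmeas m).inter (hAmeas m j)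
  set Bad : ℕ → Set X :=
    fun m => A m 0 ∪ (G m)ᶜ ∪ ⋃ j, (if μ (C m j) = 0 then C m j else ∅) with hBad
  have hBadmeas : ∀ m, MeasurableSet (Bad m) := by
    intro m
    refine ((hAmeas m 0).union (hGmeas m).compl).union (MeasurableSet.iUnion fun j => ?_)
    split_ifs
    exacts [hCmeas m j, MeasurableSet.empty]
  -- measure bounds
  have hGc : ∀ m, μ (G m)ᶜ ≤ 2 * ENNReal.ofReal (e m) := by
    intro m
    have hpair : μ.prod μ {p : X × X | e m < s m p.1 p.2} ≤ ENNReal.ofReal (e m) := by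
      have hsubs : {p : X × X | e m < s m p.1 p.2} ⊆
          {p : X × X | ENNReal.ofReal (e m) ≤ ENNReal.ofReal (s m p.1 p.2)} :=
        fun p hp => ENNReal.ofReal_le_ofReal hp.le
      have hmark := mul_meas_ge_le_lintegral₀ (μ := μ.prod μ)
        (f := fun p : X × X => ENNReal.ofReal (s m p.1 p.2))
        (ENNReal.measurable_ofReal.comp (hsm' m)).aemeasurable (ENNReal.ofReal (e m))
      have hlt : ENNReal.ofReal (e m) * μ.prod μ {p : X × X | e m < s m p.1 p.2} <
          ENNReal.ofReal (e m) * ENNReal.ofReal (e m) := by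
        calc ENNReal.ofReal (e m) * μ.prod μ {p : X × X | e m < s m p.1 p.2}
            ≤ ENNReal.ofReal (e m) *
              μ.prod μ {p : X × X | ENNReal.ofReal (e m) ≤ ENNReal.ofReal (s m p.1 p.2)} :=
              mul_le_mul_right (measure_mono hsubs) _
          _ ≤ ∫⁻ p, ENNReal.ofReal (s m p.1 p.2) ∂(μ.prod μ) := hmark
          _ < ENNReal.ofReal (e m * e m) := hsint m
          _ = ENNReal.ofReal (e m) * ENNReal.ofReal (e m) := ENNReal.ofReal_mul (he_pos m).le
      exact le_of_lt ((ENNReal.mul_lt_mul_iff_right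
        (ne_of_gt (ENNReal.ofReal_pos.mpr (he_pos m))) ENNReal.ofReal_ne_top).mp hlt)
    have hgint : ∫⁻ x, μ {y | e m < s m x y} ∂μ ≤ ENNReal.ofReal (e m) := by
      calc ∫⁻ x, μ {y | e m < s m x y} ∂μ
          = μ.prod μ {p : X × X | e m < s m p.1 p.2} := (Measure.prod_apply (hms m)).symm
        _ ≤ ENNReal.ofReal (e m) := hpair
    have h2 := mul_meas_ge_le_lintegral₀ (μ := μ) (hgmeas m).aemeasurable (2⁻¹ : ℝ≥0∞)
    have hcompl : (G m)ᶜ = {x | (2⁻¹ : ℝ≥0∞) ≤ μ {y | e m < s m x y}} := by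
      ext x
      simp [hG, not_lt]
    rw [hcompl]
    have h3 : (2⁻¹ : ℝ≥0∞) * μ {x | (2⁻¹ : ℝ≥0∞) ≤ μ {y | e m < s m x y}} ≤
        ENNReal.ofReal (e m) := h2.trans hgint
    calc μ {x | (2⁻¹ : ℝ≥0∞) ≤ μ {y | e m < s m x y}}
        = 2 * (2⁻¹ * μ {x | (2⁻¹ : ℝ≥0∞) ≤ μ {y | e m < s m x y}}) := by
          rw [← mul_assoc, ENNReal.mul_inv_cancel (by norm_num) ENNReal.ofNat_ne_top, one_mul]
      _ ≤ 2 * ENNReal.ofReal (e m) := by gcongr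
  have hBadm : ∀ m, μ (Bad m) ≤ 3 * ENNReal.ofReal (e m) := by
    intro m
    have h1 : μ (⋃ j, (if μ (C m j) = 0 then C m j else ∅)) = 0 :=
      measure_iUnion_null fun j => by split_ifs with h; exacts [h, measure_empty]
    calc μ (Bad m) ≤ μ (A m 0 ∪ (G m)ᶜ) + μ (⋃ j, (if μ (C m j) = 0 then C m j else ∅)) :=
          measure_union_le _ _
      _ ≤ (μ (A m 0) + μ (G m)ᶜ) + 0 := add_le_add (measure_union_le _ _) (le_of_eq h1)
      _ ≤ (ENNReal.ofReal (e m) + 2 * ENNReal.ofReal (e m)) + 0 :=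
          add_le_add (add_le_add (hA0 m).le (hGc m)) le_rfl
      _ = 3 * ENNReal.ofReal (e m) := by ring
  -- Borel–Cantelli
  have htsum : ∑' m, μ (Bad m) ≠ ∞ := by
    have hof : ∀ m, ENNReal.ofReal (e m) = (ENNReal.ofReal 2⁻¹) ^ m := by
      intro m
      rw [he]
      exact ENNReal.ofReal_pow (by norm_num) m
    have h1 : ∑' m, μ (Bad m) ≤ 3 * (1 - ENNReal.ofReal 2⁻¹)⁻¹ := by
      calc ∑' m, μ (Bad m) ≤ ∑' m, 3 * (ENNReal.ofReal 2⁻¹) ^ m :=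
            ENNReal.tsum_le_tsum fun m => (hBadm m).trans (le_of_eq (by rw [hof m]))
        _ = 3 * (1 - ENNReal.ofReal 2⁻¹)⁻¹ := by
            rw [ENNReal.tsum_mul_left, ENNReal.tsum_geometric]
    have h2 : (3 : ℝ≥0∞) * (1 - ENNReal.ofReal 2⁻¹)⁻¹ ≠ ∞ := by
      refine ENNReal.mul_ne_top (by norm_num) (ENNReal.inv_ne_top.mpr ?_)
      have : ENNReal.ofReal 2⁻¹ < 1 := ENNReal.ofReal_lt_one.mpr (by norm_num)
      exact ne_of_gt (tsub_pos_iff_lt.mpr this)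
    exact fun h => h2 (top_le_iff.mp (h ▸ h1))
  have hBC : μ (limsup Bad atTop) = 0 := measure_limsup_atTop_eq_zero htsum
  -- the full measure separable set S
  set Sl : ℕ → Set X := fun m => {x | μ (Prod.mk x ⁻¹' B m) = 0} with hSl
  have hSlmeas : ∀ m, MeasurableSet (Sl m) :=
    fun m => (measurable_measure_prodMk_left (hBmeas m)) (measurableSet_singleton 0)
  set S : Set X := (limsup Bad atTop)ᶜ ∩ ⋂ m, Sl m with hS
  have hSmeas : MeasurableSet S :=
    ((MeasurableSet.measurableSet_limsup hBadmeas).compl).inter (MeasurableSet.iInter hSlmeas)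
  have hSlnull : ∀ m, μ (Sl m)ᶜ = 0 := by
    intro m
    have hae2 : (fun x => μ (Prod.mk x ⁻¹' B m)) =ᵐ[μ] 0 :=
      (Measure.measure_prod_null (hBmeas m)).mp (hBnull m)
    have : μ {x | ¬ μ (Prod.mk x ⁻¹' B m) = 0} = 0 := by
      have := ae_iff.mp hae2
      simpa using this
    simpa [hSl, Set.compl_setOf] using this
  have hSnull : μ Sᶜ = 0 := by
    rw [hS, Set.compl_inter, compl_compl]
    refine measure_union_null hBC ?_
    rw [Set.compl_iInter]
    exact measure_iUnion_null hSlnull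
  -- choose net points
  have hpick : ∀ m (j : Fin (k m + 1)), ∃ y : X,
      ((C m j ∩ S).Nonempty → y ∈ C m j ∩ S) := by
    intro m j
    by_cases h : (C m j ∩ S).Nonempty
    · exact ⟨h.choose, fun _ => h.choose_spec⟩
    · exact ⟨Classical.arbitrary X, fun hcon => absurd hcon h⟩
  choose pick hpickmem using hpick
  set D : Set X := ⋃ m, ⋃ j, (S ∩ {pick m j}) with hD
  have hDcount : D.Countable :=
    Set.countable_iUnion fun m => Set.countable_iUnion fun j =>
      (Set.countable_singleton _).mono Set.inter_subset_right
  have hDsub : D ⊆ S := by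
    intro y hy
    simp only [hD, Set.mem_iUnion] at hy
    obtain ⟨m, j, hy⟩ := hy
    exact hy.1
  refine ⟨hρmeas, S, hSmeas, hSnull, D, hDsub, hDcount, ?_⟩
  -- main separability estimate
  intro x hx ε hε
  have hx1 : x ∉ limsup Bad atTop := hx.1
  have hx2 : ∀ m, μ (Prod.mk x ⁻¹' B m) = 0 := fun m => Set.mem_iInter.mp hx.2 m
  have hev : ∀ᶠ m in atTop, x ∉ Bad m :=
    Filter.not_frequently.mp (fun h => hx1 (mem_limsup_iff_frequently_mem.mpr h))
  obtain ⟨M, hM⟩ := eventually_atTop.mp hev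
  obtain ⟨m0, hm0⟩ := exists_pow_lt_of_lt_one (show (0 : ℝ) < ε / 6 by linarith)
    (show (2 : ℝ)⁻¹ < 1 by norm_num)
  set m := max M m0 with hm
  have hme : e m < ε / 6 :=
    lt_of_le_of_lt (pow_le_pow_of_le_one (by norm_num) (by norm_num) (le_max_right M m0)) hm0
  have hxB := hM m (le_max_left M m0)
  have hxA0 : x ∉ A m 0 := fun h => hxB (Or.inl (Or.inl h))
  have hxG : x ∈ G m := by
    by_contra h
    exact hxB (Or.inl (Or.inr h))
  obtain ⟨j, hj⟩ : ∃ j, x ∈ A m j := by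
    have h1 : (x : X) ∈ ⋃ i, A m i := (hAuniv m).symm ▸ Set.mem_univ x
    exact Set.mem_iUnion.mp h1
  have hj0 : j ≠ 0 := fun h => hxA0 (h ▸ hj)
  have hxC : x ∈ C m j := ⟨hxG, hj⟩
  have hCpos : μ (C m j) ≠ 0 := by
    intro h
    exact hxB (Or.inr (Set.mem_iUnion.mpr ⟨j, by rw [if_pos h]; exact hxC⟩))
  have hne : (C m j ∩ S).Nonempty := ⟨x, hxC, hx⟩
  have hy : pick m j ∈ C m j ∩ S := hpickmem m j hne
  set y := pick m j with hydef
  have hyD : y ∈ D := Set.mem_iUnion.mpr ⟨m, Set.mem_iUnion.mpr ⟨j, hy.2, rfl⟩⟩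
  have hyB : μ (Prod.mk y ⁻¹' B m) = 0 := Set.mem_iInter.mp hy.2.2 m
  have hEz : μ (C m j \ (Prod.mk x ⁻¹' B m ∪ Prod.mk y ⁻¹' B m)) ≠ 0 := by
    rwa [measure_diff_null (measure_union_null (hx2 m) hyB)]
  obtain ⟨z, hz⟩ := nonempty_of_measure_ne_zero hEz
  have hzC : z ∈ C m j := hz.1
  have hzx : (x, z) ∉ B m := fun h => hz.2 (Or.inl h)
  have hzy : (y, z) ∉ B m := fun h => hz.2 (Or.inr h)
  have hzy' : (z, y) ∉ B m := fun h => hzy ((hBsymm m z y).mp h)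
  -- σ is at most 2 e m between points of G m
  have hsbound : ∀ a b : X, a ∈ G m → b ∈ G m → s m a b ≤ 2 * e m := by
    intro a b ha hb
    have hun : μ ({w | e m < s m a w} ∪ {w | e m < s m b w}) < 1 := by
      calc μ ({w | e m < s m a w} ∪ {w | e m < s m b w})
          ≤ μ {w | e m < s m a w} + μ {w | e m < s m b w} := measure_union_le _ _
        _ < 2⁻¹ + 2⁻¹ := ENNReal.add_lt_add ha hb
        _ = 1 := ENNReal.inv_two_add_inv_two
    have hnex : ({w | e m < s m a w} ∪ {w | e m < s m b w})ᶜ.Nonempty := by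
      by_contra h
      rw [Set.not_nonempty_iff_eq_empty, Set.compl_empty_iff] at h
      rw [h, measure_univ] at hun
      exact lt_irrefl _ hun
    obtain ⟨w, hw⟩ := hnex
    simp only [Set.mem_compl_iff, Set.mem_union, Set.mem_setOf_eq, not_or, not_lt] at hw
    calc s m a b ≤ s m a w + s m w b := (hssemi m).2.2.2 a w b
      _ = s m a w + s m b w := by rw [(hssemi m).2.2.1 w b]
      _ ≤ e m + e m := add_le_add hw.1 hw.2
      _ = 2 * e m := by ring
  -- the key pointwise bound within a good cell
  have hkey : ∀ a b : X, a ∈ C m j → b ∈ C m j → (a, b) ∉ B m → ρ a b < 3 * e m := by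
    intro a b ha hb hab
    have h1 : |t m a b - ρ a b| ≤ s m a b := hBgood m (a, b) hab
    have h2 : t m a b < e m := hAdiam m j hj0 a ha.2 b hb.2
    have h3 : s m a b ≤ 2 * e m := hsbound a b ha.1 hb.1
    have h4 : ρ a b - t m a b ≤ |t m a b - ρ a b| := by
      rw [abs_sub_comm]
      exact le_abs_self _
    linarith
  have hxz : ρ x z < 3 * e m := hkey x z hxC hzC hzx
  have hzyb : ρ z y < 3 * e m := hkey z y hzC hy.1 hzy'
  refine ⟨y, hyD, ?_⟩
  have htri : ρ x y ≤ ρ x z + ρ z y := hρ.2.2.2 x z y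
  linarith
end

section
/- Let (X, μ) be a standard Borel probability space and let M be a set of admissible summable semimetrics on X such that for every ε>0 the set {H_ε(ρ, μ) : ρ ∈ M} is bounded. Then every measurable semimetric that is the limit in L¹(X×X, μ×μ) of a sequence of elements of M is an admissible semimetric. -/
open MeasureTheory Filter Function Set
open scoped ENNReal

private lemma lemA {X : Type*} [MeasurableSpace X] (μ : Measure X) [IsProbabilityMeasure μ]
    (σ : X → X → ℝ)
    (h : ∀ ε : ℝ, 0 < ε → ∃ k, IsEpsCover μ σ ε k) :
    ∃ S : Set X, MeasurableSet S ∧ μ Sᶜ = 0 ∧ SeparableOn σ S := by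
  have hpos : ∀ m : ℕ, (0:ℝ) < (1/2)^m := fun m => by positivity
  choose k hk using fun m : ℕ => h ((1/2)^m) (hpos m)
  choose A hmeas huniv h0 hdiam using fun m => hk m
  set T : Set X := Filter.limsup (fun m => A m 0) atTop with hTdef
  have hTmeas : MeasurableSet T := by
    rw [hTdef, limsup_eq_iInf_iSup_of_nat]
    exact MeasurableSet.iInter fun n =>
      MeasurableSet.iUnion fun m => MeasurableSet.iUnion fun _ => hmeas m 0
  have hT0 : μ T = 0 := by
    apply measure_limsup_atTop_eq_zero
    have h1 : ∀ m, μ (A m 0) ≤ (ENNReal.ofReal (1/2))^m := by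
      intro m
      calc μ (A m 0) ≤ ENNReal.ofReal ((1/2)^m) := (h0 m).le
        _ = (ENNReal.ofReal (1/2))^m := by
            rw [← ENNReal.ofReal_pow (by norm_num)]
    refine ne_top_of_le_ne_top ?_ (ENNReal.tsum_le_tsum h1)
    rw [ENNReal.tsum_geometric]
    refine ENNReal.inv_ne_top.2 ?_
    have : ENNReal.ofReal (1/2) < 1 := ENNReal.ofReal_lt_one.2 (by norm_num)
    exact (tsub_pos_of_lt this).ne'
  refine ⟨Tᶜ, hTmeas.compl, by simpa using hT0, ?_⟩
  classical
  -- choice of countable dense set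
  set Dmi : ∀ m : ℕ, Fin (k m + 1) → Set X := fun m i =>
    if h : (Tᶜ ∩ A m i).Nonempty then {h.choose} else ∅ with hDmi
  refine ⟨⋃ m, ⋃ i, Dmi m i, ?_, ?_, ?_⟩
  · rintro x hx
    simp only [mem_iUnion] at hx
    obtain ⟨m, i, hx⟩ := hx
    rw [hDmi] at hx
    dsimp only at hx
    split_ifs at hx with hne
    · rw [mem_singleton_iff] at hx; subst hx; exact hne.choose_spec.1
    · exact absurd hx (notMem_empty x)
  · exact countable_iUnion fun m => countable_iUnion fun i => by
      rw [hDmi]; dsimp only; split_ifs <;> simp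
  · intro x hx ε hε
    have hxT : x ∉ T := hx
    rw [hTdef, mem_limsup_iff_frequently_mem, Filter.not_frequently] at hxT
    rw [Filter.eventually_atTop] at hxT
    obtain ⟨N, hN⟩ := hxT
    obtain ⟨m, hm1, hm2⟩ : ∃ m, N ≤ m ∧ (1/2:ℝ)^m < ε := by
      obtain ⟨m0, hm0⟩ := exists_pow_lt_of_lt_one hε (by norm_num : (1/2:ℝ) < 1)
      exact ⟨max N m0, le_max_left _ _,
        lt_of_le_of_lt (pow_le_pow_of_le_one (by norm_num) (by norm_num) (le_max_right _ _)) hm0⟩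
    have hxu : x ∈ ⋃ i, A m i := by rw [huniv m]; trivial
    obtain ⟨i, hxi⟩ := mem_iUnion.1 hxu
    have hi0 : i ≠ 0 := by
      rintro rfl; exact hN m hm1 hxi
    have hne : (Tᶜ ∩ A m i).Nonempty := ⟨x, hx, hxi⟩
    refine ⟨hne.choose, ?_, ?_⟩
    · refine mem_iUnion.2 ⟨m, mem_iUnion.2 ⟨i, ?_⟩⟩
      rw [hDmi]; dsimp only; rw [dif_pos hne]; rfl
    · exact lt_trans (hdiam m i hi0 x hxi hne.choose hne.choose_spec.2) hm2


private lemma lemB {X : Type*} [MeasurableSpace X] (μ : Measure X) [IsProbabilityMeasure μ]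
    (ρ σ : X → X → ℝ) (hσ : IsSemimetric σ)
    (hρm : Measurable (Function.uncurry ρ)) (hσm : Measurable (Function.uncurry σ))
    (ε : ℝ) (hε : 0 < ε) (k : ℕ) (hcov : IsEpsCover μ ρ (ε/4) k)
    (hL1 : L1dist μ ρ σ < ENNReal.ofReal (ε^3/(128*((k:ℝ)+1)))) :
    ∃ k', IsEpsCover μ σ ε k' := by
  classical
  obtain ⟨A, hAm, hAu, hA0, hAd⟩ := hcov
  set β : ℝ := ε/(8*((k:ℝ)+1)) with hβ
  have hkpos : (0:ℝ) < (k:ℝ)+1 := by positivity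
  have hβpos : 0 < β := by rw [hβ]; positivity
  have hε4 : (0:ℝ) < ε/4 := by positivity
  have habs : Measurable fun p : X × X => |ρ p.1 p.2 - σ p.1 p.2| := (hρm.sub hσm).abs
  set E : Set (X × X) := {p | ε/4 ≤ |ρ p.1 p.2 - σ p.1 p.2|} with hE
  have hEm : MeasurableSet E := measurableSet_le measurable_const habs
  -- first Markov inequality
  have hkey1 : ENNReal.ofReal (ε/4) * (μ.prod μ) E ≤ L1dist μ ρ σ := by
    have h := mul_meas_ge_le_lintegral₀ (μ := μ.prod μ)
      (f := fun p => ENNReal.ofReal |ρ p.1 p.2 - σ p.1 p.2|)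
      (habs.ennreal_ofReal).aemeasurable (ENNReal.ofReal (ε/4))
    have hsub : E ⊆ {p : X × X | ENNReal.ofReal (ε/4) ≤ ENNReal.ofReal |ρ p.1 p.2 - σ p.1 p.2|} :=
      fun p hp => ENNReal.ofReal_le_ofReal hp
    calc ENNReal.ofReal (ε/4) * (μ.prod μ) E
        ≤ ENNReal.ofReal (ε/4) * (μ.prod μ) {p : X × X |
            ENNReal.ofReal (ε/4) ≤ ENNReal.ofReal |ρ p.1 p.2 - σ p.1 p.2|} :=
          mul_le_mul_right (measure_mono hsub) _
      _ ≤ ∫⁻ p, ENNReal.ofReal |ρ p.1 p.2 - σ p.1 p.2| ∂(μ.prod μ) := h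
      _ = L1dist μ ρ σ := rfl
  -- bad set
  have hslm : Measurable fun x => μ (Prod.mk x ⁻¹' E) := measurable_measure_prodMk_left hEm
  set Bad : Set X := {x | ENNReal.ofReal β ≤ μ (Prod.mk x ⁻¹' E)} with hBadDef
  have hBadm : MeasurableSet Bad := measurableSet_le measurable_const hslm
  have hkey2 : ENNReal.ofReal β * μ Bad ≤ (μ.prod μ) E := by
    have h := mul_meas_ge_le_lintegral₀ (μ := μ) hslm.aemeasurable (ENNReal.ofReal β)
    rwa [← Measure.prod_apply hEm] at h
  -- μ Bad < ofReal (ε/4)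
  have hrhs : ENNReal.ofReal (ε^3/(128*((k:ℝ)+1)))
      = ENNReal.ofReal (ε/4) * (ENNReal.ofReal β * ENNReal.ofReal (ε/4)) := by
    rw [← ENNReal.ofReal_mul hβpos.le, ← ENNReal.ofReal_mul hε4.le]
    congr 1
    rw [hβ]; field_simp; ring
  have hchain : ENNReal.ofReal (ε/4) * (ENNReal.ofReal β * μ Bad)
      < ENNReal.ofReal (ε/4) * (ENNReal.ofReal β * ENNReal.ofReal (ε/4)) := by
    refine lt_of_le_of_lt (le_trans (mul_le_mul_right hkey2 _) hkey1) ?_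
    rwa [hrhs] at hL1
  have hBadlt : μ Bad < ENNReal.ofReal (ε/4) := by
    have h1 := (ENNReal.mul_lt_mul_iff_right (by simp [hε4]) ENNReal.ofReal_ne_top).1 hchain
    exact (ENNReal.mul_lt_mul_iff_right (by simp [hβpos]) ENNReal.ofReal_ne_top).1 h1
  -- small pieces
  set Sm : Set X := ⋃ i : Fin (k+1),
    if i ≠ 0 ∧ μ (A i) ≤ ENNReal.ofReal (2*β) then A i else ∅ with hSmDef
  have hSmm : MeasurableSet Sm := by
    refine MeasurableSet.iUnion fun i => ?_
    split_ifs
    · exact hAm i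
    · exact MeasurableSet.empty
  have hSm : μ Sm ≤ ENNReal.ofReal (ε/4) := by
    calc μ Sm ≤ ∑ i : Fin (k+1), μ (if i ≠ 0 ∧ μ (A i) ≤ ENNReal.ofReal (2*β) then A i else ∅) :=
        measure_iUnion_fintype_le _ _
      _ ≤ ∑ _i : Fin (k+1), ENNReal.ofReal (2*β) := by
          refine Finset.sum_le_sum fun i _ => ?_
          split_ifs with h
          · exact h.2
          · simp
      _ = (k+1 : ℕ) * ENNReal.ofReal (2*β) := by
          rw [Finset.sum_const, Finset.card_univ, Fintype.card_fin, nsmul_eq_mul]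
      _ = ENNReal.ofReal (((k:ℝ)+1) * (2*β)) := by
          rw [← ENNReal.ofReal_natCast (k+1), ← ENNReal.ofReal_mul (Nat.cast_nonneg _)]
          congr 1
          push_cast; ring
      _ = ENNReal.ofReal (ε/4) := by
          congr 1
          rw [hβ]; field_simp; ring
  -- the new cover
  set C : Fin (k+1) → Set X := fun i =>
    if i = 0 ∨ μ (A i) ≤ ENNReal.ofReal (2*β) then ∅ else A i \ Bad with hCdef
  have hCm : ∀ i, MeasurableSet (C i) := by
    intro i; rw [hCdef]; dsimp only; split_ifs
    · exact MeasurableSet.empty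
    · exact (hAm i).diff hBadm
  refine ⟨k, fun i => if i = 0 then (⋃ j, C j)ᶜ else C i, ?_, ?_, ?_, ?_⟩
  · intro i; dsimp only; split_ifs
    · exact (MeasurableSet.iUnion fun j => hCm j).compl
    · exact hCm i
  · apply eq_univ_of_forall
    intro x
    by_cases hx : x ∈ ⋃ j, C j
    · obtain ⟨j, hj⟩ := mem_iUnion.1 hx
      have hj0 : j ≠ 0 := by
        rintro rfl
        rw [hCdef] at hj; simp at hj
      exact mem_iUnion.2 ⟨j, by rw [if_neg hj0]; exact hj⟩
    · exact mem_iUnion.2 ⟨0, by rw [if_pos rfl]; exact hx⟩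
  · dsimp only; rw [if_pos rfl]
    have hsub : (⋃ j, C j)ᶜ ⊆ Bad ∪ Sm ∪ A 0 := by
      intro x hx
      rw [mem_compl_iff] at hx
      by_cases h1 : x ∈ Bad
      · exact Or.inl (Or.inl h1)
      by_cases h2 : x ∈ Sm
      · exact Or.inl (Or.inr h2)
      right
      by_contra h0
      have hxu : x ∈ ⋃ i, A i := by rw [hAu]; trivial
      obtain ⟨i, hxi⟩ := mem_iUnion.1 hxu
      have hi0 : i ≠ 0 := by rintro rfl; exact h0 hxi
      have hbig : ¬ μ (A i) ≤ ENNReal.ofReal (2*β) := by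
        intro hsmall
        apply h2
        rw [hSmDef]
        exact mem_iUnion.2 ⟨i, by rw [if_pos ⟨hi0, hsmall⟩]; exact hxi⟩
      apply hx
      refine mem_iUnion.2 ⟨i, ?_⟩
      rw [hCdef]; dsimp only
      rw [if_neg (by push_neg; exact ⟨hi0, not_le.1 hbig⟩)]
      exact ⟨hxi, h1⟩
    calc μ ((⋃ j, C j)ᶜ) ≤ μ (Bad ∪ Sm ∪ A 0) := measure_mono hsub
      _ ≤ μ Bad + μ Sm + μ (A 0) :=
          le_trans (measure_union_le _ _) (add_le_add_left (measure_union_le _ _) _)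
      _ < ENNReal.ofReal (ε/4) + ENNReal.ofReal (ε/4) + ENNReal.ofReal (ε/4) := by
          refine ENNReal.add_lt_add_of_le_of_lt ?_ (add_le_add hBadlt.le hSm) hA0
          exact ne_top_of_le_ne_top (by simp) (le_trans (add_le_add hBadlt.le hSm)
            (le_of_eq rfl))
      _ = ENNReal.ofReal (3*(ε/4)) := by
          rw [← ENNReal.ofReal_add hε4.le hε4.le, ← ENNReal.ofReal_add (by positivity) hε4.le]
          congr 1; ring
      _ < ENNReal.ofReal ε := ENNReal.ofReal_lt_ofReal_iff_of_nonneg (by positivity) |>.2 (by linarith)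
  · intro i hi0 x hx y hy
    dsimp only at hx hy
    rw [if_neg hi0] at hx hy
    rw [hCdef] at hx hy; dsimp only at hx hy
    rcases Classical.em (i = 0 ∨ μ (A i) ≤ ENNReal.ofReal (2*β)) with hcond | hcond
    · rw [if_pos hcond] at hx; exact absurd hx (notMem_empty x)
    rw [if_neg hcond] at hx hy
    push_neg at hcond
    obtain ⟨-, hbig⟩ := hcond
    obtain ⟨hxA, hxB⟩ := hx
    obtain ⟨hyA, hyB⟩ := hy
    rw [hBadDef, mem_setOf_eq, not_le] at hxB hyB
    -- find a good intermediate point z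
    have hnz : (A i \ (Prod.mk x ⁻¹' E ∪ Prod.mk y ⁻¹' E)).Nonempty := by
      by_contra hemp
      rw [not_nonempty_iff_eq_empty] at hemp
      have hsub2 : A i ⊆ (A i \ (Prod.mk x ⁻¹' E ∪ Prod.mk y ⁻¹' E)) ∪
          (Prod.mk x ⁻¹' E ∪ Prod.mk y ⁻¹' E) := fun z hz => by
        by_cases h : z ∈ Prod.mk x ⁻¹' E ∪ Prod.mk y ⁻¹' E
        · exact Or.inr h
        · exact Or.inl ⟨hz, h⟩
      have : μ (A i) ≤ ENNReal.ofReal β + ENNReal.ofReal β := by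
        calc μ (A i) ≤ μ ((A i \ (Prod.mk x ⁻¹' E ∪ Prod.mk y ⁻¹' E)) ∪
              (Prod.mk x ⁻¹' E ∪ Prod.mk y ⁻¹' E)) := measure_mono hsub2
          _ ≤ μ (A i \ (Prod.mk x ⁻¹' E ∪ Prod.mk y ⁻¹' E)) +
              (μ (Prod.mk x ⁻¹' E) + μ (Prod.mk y ⁻¹' E)) :=
            le_trans (measure_union_le _ _) (add_le_add_right (measure_union_le _ _) _)
          _ ≤ ENNReal.ofReal β + ENNReal.ofReal β := by
              rw [hemp, measure_empty, zero_add]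
              exact add_le_add hxB.le hyB.le
      rw [← ENNReal.ofReal_add hβpos.le hβpos.le] at this
      have h2 : (2:ℝ)*β = β + β := by ring
      rw [h2] at hbig
      exact absurd (lt_of_lt_of_le hbig this) (lt_irrefl _)
    obtain ⟨z, hzA, hzE⟩ := hnz
    rw [mem_union, not_or] at hzE
    obtain ⟨hzx, hzy⟩ := hzE
    rw [mem_preimage, hE, mem_setOf_eq, not_le] at hzx hzy
    have hρxz : ρ x z < ε/4 := hAd i hi0 x hxA z hzA
    have hρyz : ρ y z < ε/4 := hAd i hi0 y hyA z hzA
    have haxz := abs_lt.1 hzx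
    have hayz := abs_lt.1 hzy
    have htri := hσ.2.2.2 x z y
    have hsym := hσ.2.2.1 z y
    -- σ x y ≤ σ x z + σ z y, σ z y = σ y z, σ x z < ρ x z + ε/4, etc.
    have h1 : σ x z < ε/2 := by dsimp only at haxz; linarith
    have h2 : σ y z < ε/2 := by dsimp only at hayz; linarith
    calc σ x y ≤ σ x z + σ z y := htri
      _ = σ x z + σ y z := by rw [hsym]
      _ < ε/2 + ε/2 := add_lt_add h1 h2
      _ = ε := by ring


/-- if `M` is a set of admissible summable semimetrics whose `ε`-entropies
are uniformly bounded for every `ε > 0`, then every measurable semimetric which is an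
`L¹(X×X, μ×μ)`-limit of a sequence of elements of `M` is admissible. -/
theorem statement6 {X : Type*} [MeasurableSpace X] [StandardBorelSpace X]
    (μ : Measure X) [IsProbabilityMeasure μ] (M : Set (X → X → ℝ))
    (hM : ∀ ρ ∈ M, IsSemimetric ρ ∧ Admissible μ ρ ∧
      Integrable (Function.uncurry ρ) (μ.prod μ))
    (hent : ∀ ε : ℝ, 0 < ε → ∃ C : ℝ≥0∞, C ≠ ∞ ∧ ∀ ρ ∈ M, epsEntropy μ ρ ε ≤ C)
    (σ : X → X → ℝ) (hσ : IsSemimetric σ) (hσmeas : Measurable (Function.uncurry σ))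
    (u : ℕ → X → X → ℝ) (hu : ∀ n, u n ∈ M)
    (hconv : Tendsto (fun n => L1dist μ (u n) σ) atTop (nhds 0)) :
    Admissible μ σ := by
  refine ⟨hσmeas, lemA μ σ ?_⟩
  intro ε hε
  obtain ⟨C, hCtop, hC⟩ := hent (ε/4) (by positivity)
  set K : ℕ := ⌈(2:ℝ) ^ ((C+1).toReal)⌉₊ + 1 with hKdef
  have hδ : (0:ℝ) < ε^3/(128*((K:ℝ)+1)) := by positivity
  obtain ⟨n, hn⟩ := (hconv.eventually (Iio_mem_nhds (ENNReal.ofReal_pos.2 hδ))).exists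
  have hlt : epsEntropy μ (u n) (ε/4) < C + 1 :=
    lt_of_le_of_lt (hC (u n) (hu n)) (ENNReal.lt_add_right hCtop one_ne_zero)
  rw [epsEntropy] at hlt
  obtain ⟨h, ⟨k, hkcov, rfl⟩, hhlt⟩ := sInf_lt_iff.1 hlt
  have hkK : k ≤ K := by
    rcases le_or_gt k 1 with hk1 | hk1
    · exact le_trans hk1 (by rw [hKdef]; omega)
    · have hk2 : (2:ℝ) ≤ (k:ℝ) := by exact_mod_cast hk1
      have hlogb : 0 ≤ Real.logb 2 (k:ℝ) := Real.logb_nonneg one_lt_two (by linarith)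
      have hC1 : (C + 1) ≠ ∞ := by
        simp [hCtop]
      have h1 : Real.logb 2 (k:ℝ) < (C+1).toReal :=
        (ENNReal.ofReal_lt_iff_lt_toReal hlogb hC1).1 hhlt
      have h2 : (k:ℝ) = (2:ℝ) ^ (Real.logb 2 (k:ℝ)) :=
        (Real.rpow_logb (by norm_num) (by norm_num) (by positivity)).symm
      have h3 : (2:ℝ) ^ (Real.logb 2 (k:ℝ)) ≤ (2:ℝ) ^ ((C+1).toReal) :=
        Real.rpow_le_rpow_of_exponent_le one_le_two h1.le
      have h4 : (k:ℝ) ≤ (⌈(2:ℝ) ^ ((C+1).toReal)⌉₊ : ℝ) :=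
        le_trans (h2.le.trans h3) (Nat.le_ceil _)
      have h5 : (k:ℝ) ≤ (K:ℝ) := by
        rw [hKdef]; push_cast; linarith
      exact_mod_cast h5
  have hM' := hM (u n) (hu n)
  refine lemB μ (u n) σ hσ hM'.2.1.1 hσmeas ε hε k hkcov (lt_of_lt_of_le hn ?_)
  apply ENNReal.ofReal_le_ofReal
  apply div_le_div_of_nonneg_left (by positivity) (by positivity)
  have : (k:ℝ) ≤ (K:ℝ) := by exact_mod_cast hkK
  linarith
end

section
/- Let (X, μ) be a standard Borel probability space. Suppose a sequence of admissible semimetrics ρ_n converges μ×μ-almost everywhere to an admissible semimetric ρ_lim. Then there exists a measurable set X' ⊆ X of full measure such that for all x, y ∈ X', limsup_n ρ_n(x,y) = ρ_lim(x,y); moreover, if x, y ∈ X' and ρ_lim(x,y) = 0, then lim_n ρ_n(x,y) = 0. -/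
open MeasureTheory Filter Function Set
open scoped ENNReal

/-- if admissible semimetrics `ρ_n` converge `μ×μ`-a.e. to an admissible
semimetric `ρ_lim`, then there is a set `X'` of full measure such that
`limsup_n ρ_n(x,y) = ρ_lim(x,y)` for ALL `x, y ∈ X'`, and moreover `ρ_n(x,y) → 0`
whenever `x, y ∈ X'` and `ρ_lim(x,y) = 0`. -/
theorem statement7 {X : Type*} [MeasurableSpace X] [StandardBorelSpace X]
    (μ : Measure X) [IsProbabilityMeasure μ] (ρn : ℕ → X → X → ℝ) (ρlim : X → X → ℝ)
    (hρn : ∀ n, IsSemimetric (ρn n)) (hρnadm : ∀ n, Admissible μ (ρn n))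
    (hρ : IsSemimetric ρlim) (hρadm : Admissible μ ρlim)
    (hae : ∀ᵐ p ∂(μ.prod μ), Tendsto (fun n => ρn n p.1 p.2) atTop (nhds (ρlim p.1 p.2))) :
    ∃ X' : Set X, MeasurableSet X' ∧ μ X'ᶜ = 0 ∧
      (∀ x ∈ X', ∀ y ∈ X', Filter.limsup (fun n => ρn n x y) atTop = ρlim x y) ∧
      ∀ x ∈ X', ∀ y ∈ X', ρlim x y = 0 → Tendsto (fun n => ρn n x y) atTop (nhds 0) := by

  classical
  obtain ⟨hnn, hdiag, hsym, htri⟩ := hρ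
  obtain ⟨hmeas, S, hSmeas, hSnull, D, hDS, hDcnt, hDdense⟩ := hρadm
  -- measurable balls of the limit semimetric
  set B : X → ℝ → Set X := fun a r => {z | ρlim a z < r} with hBdef
  have hBmeas : ∀ (a : X) (r : ℝ), MeasurableSet (B a r) := fun a r =>
    measurableSet_lt (hmeas.comp measurable_prodMk_left) measurable_const
  -- the union of all null rational balls centered at points of D
  set N : Set X := ⋃ d ∈ D, ⋃ q : ℚ, ⋃ _ : μ (B d (q : ℝ)) = 0, B d (q : ℝ) with hNdef
  have hNmeas : MeasurableSet N :=
    MeasurableSet.biUnion hDcnt fun d _ => MeasurableSet.iUnion fun q =>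
      MeasurableSet.iUnion fun _ => hBmeas d q
  have hNnull : μ N = 0 := by
    refine (measure_biUnion_null_iff hDcnt).2 fun d _ => ?_
    refine measure_iUnion_null fun q => ?_
    by_cases h : μ (B d (q : ℝ)) = 0
    · exact measure_mono_null (Set.iUnion_subset fun _ => subset_rfl) h
    · simp [h]
  -- every point of S \ N has balls of positive measure
  have hpos : ∀ a ∈ S \ N, ∀ ε : ℝ, 0 < ε → μ (B a ε) ≠ 0 := by
    rintro a ⟨haS, haN⟩ ε hε
    obtain ⟨d, hdD, hd⟩ := hDdense a haS (ε / 4) (by linarith)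
    obtain ⟨q, hq1, hq2⟩ := exists_rat_btwn (show ρlim a d < ε / 2 by linarith)
    have hqpos : μ (B d (q : ℝ)) ≠ 0 := by
      intro h0
      apply haN
      refine Set.mem_biUnion hdD ?_
      refine Set.mem_iUnion.2 ⟨q, ?_⟩
      refine Set.mem_iUnion.2 ⟨h0, ?_⟩
      show ρlim d a < (q : ℝ)
      rw [hsym d a]; exact hq1
    intro h0
    apply hqpos
    refine measure_mono_null ?_ h0
    intro z hz
    have hz' : ρlim d z < (q : ℝ) := hz
    show ρlim a z < ε
    calc ρlim a z ≤ ρlim a d + ρlim d z := htri a d z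
      _ < (q : ℝ) + (q : ℝ) := by linarith
      _ ≤ ε := by linarith
  -- the set where convergence holds
  set T : Set (X × X) := {p | Tendsto (fun n => ρn n p.1 p.2) atTop (nhds (ρlim p.1 p.2))}
    with hTdef
  have hTnull : (μ.prod μ) Tᶜ = 0 := by
    have := ae_iff.mp hae
    simpa [hTdef, Set.compl_def] using this
  obtain ⟨W, hTW, hWmeas, hWnull⟩ := exists_measurable_superset_of_null hTnull
  -- the set of points whose slice of W is null
  set F : Set X := {x | μ (Prod.mk x ⁻¹' W) = 0} with hFdef
  have hFmeas : MeasurableSet F := by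
    have : Measurable fun x => μ (Prod.mk x ⁻¹' W) :=
      measurable_measure_prodMk_left hWmeas
    exact this (measurableSet_singleton 0)
  have hFnull : μ Fᶜ = 0 := by
    have h := MeasureTheory.Measure.measure_ae_null_of_prod_null hWnull
    have h' : ∀ᵐ x ∂μ, μ (Prod.mk x ⁻¹' W) = 0 := h
    simpa [hFdef, ae_iff, Set.compl_def] using ae_iff.mp h'
  refine ⟨(S \ N) ∩ F, ((hSmeas.diff hNmeas).inter hFmeas), ?_, ?_⟩
  · rw [Set.compl_inter]
    refine measure_union_null ?_ hFnull
    have hc : (S \ N)ᶜ = Sᶜ ∪ N := by rw [Set.diff_eq, Set.compl_inter, compl_compl]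
    rw [hc]; exact measure_union_null hSnull hNnull
  have key : ∀ x ∈ (S \ N) ∩ F, ∀ y ∈ (S \ N) ∩ F,
      Tendsto (fun n => ρn n x y) atTop (nhds (ρlim x y)) := by
    rintro x ⟨hxSN, hxF⟩ y ⟨hySN, hyF⟩
    -- for any center a in S \ N and δ > 0 we can find a good z
    have getz : ∀ a ∈ S \ N, ∀ δ : ℝ, 0 < δ → ∃ z, ρlim a z < δ ∧
        Tendsto (fun n => ρn n x z) atTop (nhds (ρlim x z)) ∧
        Tendsto (fun n => ρn n y z) atTop (nhds (ρlim y z)) := by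
      intro a ha δ hδ
      have hball := hpos a ha δ hδ
      have hsub : ¬ B a δ ⊆ (Prod.mk x ⁻¹' W) ∪ (Prod.mk y ⁻¹' W) := by
        intro hs
        exact hball (measure_mono_null hs (measure_union_null hxF hyF))
      obtain ⟨z, hzB, hzW⟩ := Set.not_subset.mp hsub
      rw [Set.mem_union, not_or] at hzW
      refine ⟨z, hzB, ?_, ?_⟩
      · have : (x, z) ∈ T := by
          by_contra h
          exact hzW.1 (hTW h)
        exact this
      · have : (y, z) ∈ T := by
          by_contra h
          exact hzW.2 (hTW h)
        exact this
    rw [Metric.tendsto_nhds]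
    intro ε hε
    obtain ⟨z₁, hz₁, tx₁, ty₁⟩ := getz x hxSN (ε / 4) (by linarith)
    obtain ⟨z₂, hz₂, tx₂, ty₂⟩ := getz y hySN (ε / 4) (by linarith)
    have e1 : ∀ᶠ n in atTop, |ρn n x z₁ - ρlim x z₁| < ε / 4 :=
      tx₁.eventually (eventually_abs_sub_lt _ (by linarith))
    have e2 : ∀ᶠ n in atTop, |ρn n y z₁ - ρlim y z₁| < ε / 4 :=
      ty₁.eventually (eventually_abs_sub_lt _ (by linarith))
    have e3 : ∀ᶠ n in atTop, |ρn n x z₂ - ρlim x z₂| < ε / 4 :=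
      tx₂.eventually (eventually_abs_sub_lt _ (by linarith))
    have e4 : ∀ᶠ n in atTop, |ρn n y z₂ - ρlim y z₂| < ε / 4 :=
      ty₂.eventually (eventually_abs_sub_lt _ (by linarith))
    filter_upwards [e1, e2, e3, e4] with n h1 h2 h3 h4
    obtain ⟨hnn', hdiag', hsym', htri'⟩ := hρn n
    rw [Real.dist_eq, abs_lt]
    rw [abs_lt] at h1 h2 h3 h4
    have t1 : ρn n x y ≤ ρn n x z₁ + ρn n z₁ y := htri' x z₁ y
    have t2 : ρn n x z₂ ≤ ρn n x y + ρn n y z₂ := htri' x y z₂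
    have s1 : ρn n z₁ y = ρn n y z₁ := hsym' z₁ y
    have l1 : ρlim y z₁ ≤ ρlim y x + ρlim x z₁ := htri y x z₁
    have l2 : ρlim x y ≤ ρlim x z₂ + ρlim z₂ y := htri x z₂ y
    have l3 : ρlim y x = ρlim x y := hsym y x
    have l4 : ρlim z₂ y = ρlim y z₂ := hsym z₂ y
    constructor <;> linarith
  refine ⟨?_, ?_⟩
  · intro x hx y hy
    exact (key x hx y hy).limsup_eq
  · intro x hx y hy h0
    have := key x hx y hy
    rwa [h0] at this
end

section
/- Let (X, μ) be a standard Borel probability space and let R > 0. Suppose a sequence of measurable semimetrics ρ_n, each bounded above by R, converges in L¹(X×X, μ×μ) to an admissible semimetric ρ bounded above by R. Then ‖ρ_n − ρ‖_m → 0, i.e., the sequence converges to ρ in the m-norm. -/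
open MeasureTheory Filter Function Set
open scoped ENNReal

lemma pt_bound {X : Type*} {ρa ρb : X → X → ℝ} (ha : IsSemimetric ρa) (hb : IsSemimetric ρb)
    {ε : ℝ} {x y z w : X} (hxz : ρb x z < ε) (hyw : ρb y w < ε) :
    |ρa x y - ρb x y| ≤ 4*ε + |ρa x z - ρb x z| + |ρa y w - ρb y w| + |ρa z w - ρb z w| := by
  obtain ⟨ha0, harefl, hasymm, hatri⟩ := ha
  obtain ⟨hb0, hbrefl, hbsymm, hbtri⟩ := hb
  have A1 : ρa x y ≤ ρa x z + ρa z w + ρa w y := by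
    have t1 := hatri x z y; have t2 := hatri z w y; linarith
  have A2 : ρb z w ≤ ρb z x + ρb x y + ρb y w := by
    have t1 := hbtri z x w; have t2 := hbtri x y w; linarith
  have B1 : ρb x y ≤ ρb x z + ρb z w + ρb w y := by
    have t1 := hbtri x z y; have t2 := hbtri z w y; linarith
  have B2 : ρa z w ≤ ρa z x + ρa x y + ρa y w := by
    have t1 := hatri z x w; have t2 := hatri x y w; linarith
  have s1 : ρa w y = ρa y w := hasymm w y
  have s2 : ρb z x = ρb x z := hbsymm z x
  have s3 : ρb w y = ρb y w := hbsymm w y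
  have s4 : ρa z x = ρa x z := hasymm z x
  have e1 := le_abs_self (ρa x z - ρb x z); have e1' := neg_abs_le (ρa x z - ρb x z)
  have e2 := le_abs_self (ρa y w - ρb y w); have e2' := neg_abs_le (ρa y w - ρb y w)
  have e3 := le_abs_self (ρa z w - ρb z w); have e3' := neg_abs_le (ρa z w - ρb z w)
  rw [abs_le]
  constructor <;> linarith

lemma exists_cover {X : Type*} [MeasurableSpace X] (μ : Measure X) [IsProbabilityMeasure μ]
    (ρ : X → X → ℝ) (hmeas : Measurable (Function.uncurry ρ)) (hρ : IsSemimetric ρ)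
    (S : Set X) (hSmeas : MeasurableSet S) (hScompl : μ Sᶜ = 0)
    (D : Set X) (hDS : D ⊆ S) (hDc : D.Countable)
    (hdense : ∀ x ∈ S, ∀ ε : ℝ, 0 < ε → ∃ y ∈ D, ρ x y < ε)
    {ε : ℝ} (hε : 0 < ε) (hε1 : ε ≤ 1) :
    ∃ (N : ℕ) (Y : Fin (N+1) → Set X) (m : ℝ≥0∞),
      0 < m ∧ m ≠ ∞ ∧ (∀ i, MeasurableSet (Y i)) ∧ (∀ i, m ≤ μ (Y i)) ∧
      (∀ i, ∀ x ∈ Y i, ∀ y ∈ Y i, ρ x y < ε) ∧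
      μ (⋃ i, Y i)ᶜ ≤ ENNReal.ofReal ε := by
  classical
  obtain ⟨hρ0, hρrefl, hρsymm, hρtri⟩ := hρ
  have hS1 : μ S = 1 := by
    have h1 := measure_add_measure_compl (μ := μ) hSmeas
    rw [hScompl, add_zero, measure_univ] at h1
    exact h1
  have hSne : S.Nonempty := nonempty_of_measure_ne_zero (by rw [hS1]; exact one_ne_zero)
  obtain ⟨x₀, hx₀⟩ := hSne
  have hDne : D.Nonempty := by
    obtain ⟨y, hy, -⟩ := hdense x₀ hx₀ 1 one_pos
    exact ⟨y, hy⟩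
  obtain ⟨e, he⟩ := hDc.exists_eq_range hDne
  set B : ℕ → Set X := fun i => {x | ρ x (e i) < ε/2} with hB
  have hBmeas : ∀ i, MeasurableSet (B i) := by
    intro i
    have : Measurable fun x => ρ x (e i) :=
      hmeas.comp (measurable_id.prodMk measurable_const)
    exact measurableSet_lt this measurable_const
  have hBdiam : ∀ i, ∀ x ∈ B i, ∀ y ∈ B i, ρ x y < ε := by
    intro i x hx y hy
    have t := hρtri x (e i) y
    have hs := hρsymm (e i) y
    simp only [hB, mem_setOf_eq] at hx hy
    linarith
  have hScover : S ⊆ ⋃ i, B i := by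
    intro x hx
    obtain ⟨y, hyD, hxy⟩ := hdense x hx (ε/2) (by linarith)
    rw [he] at hyD
    obtain ⟨i, rfl⟩ := hyD
    exact mem_iUnion.mpr ⟨i, hxy⟩
  have hμU : μ (⋃ i, B i) = 1 := by
    refine le_antisymm ((measure_mono (subset_univ _)).trans_eq measure_univ) ?_
    calc (1:ℝ≥0∞) = μ S := hS1.symm
    _ ≤ μ (⋃ i, B i) := measure_mono hScover
  have htend : Tendsto (fun n => μ (Set.accumulate B n)) atTop (nhds (μ (⋃ i, B i))) :=
    tendsto_measure_iUnion_accumulate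
  have hhalf2 : ENNReal.ofReal (ε/2) ≤ 1 := by
    rw [show (1:ℝ≥0∞) = ENNReal.ofReal 1 by simp]
    exact ENNReal.ofReal_le_ofReal (by linarith)
  have hhalf : ENNReal.ofReal (ε/2) < 1 := by
    rw [ENNReal.ofReal_lt_one]; linarith
  have hlt : 1 - ENNReal.ofReal (ε/2) < μ (⋃ i, B i) := by
    rw [hμU]
    exact ENNReal.sub_lt_self ENNReal.one_ne_top one_ne_zero
      (by rw [ne_eq, ENNReal.ofReal_eq_zero]; push_neg; linarith)
  obtain ⟨N, hN⟩ := (htend.eventually (eventually_gt_nhds hlt)).exists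
  have hex : ∃ i₀, 0 < μ (B i₀) := by
    by_contra h
    push_neg at h
    have hz : μ (Set.accumulate B N) = 0 := by
      rw [Set.accumulate_def]
      exact (measure_biUnion_null_iff (Set.to_countable _)).mpr
        (fun i _ => le_antisymm (h i) bot_le)
    rw [hz] at hN
    have hpos : (0:ℝ≥0∞) < 1 - ENNReal.ofReal (ε/2) := by
      rw [tsub_pos_iff_lt]; exact hhalf
    exact absurd hN (not_lt.mpr hpos.le)
  obtain ⟨i₀, hi₀⟩ := hex
  refine ⟨N, fun i => if 0 < μ (B i.val) then B i.val else B i₀,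
    Finset.univ.inf' Finset.univ_nonempty
      (fun i : Fin (N+1) => if 0 < μ (B i.val) then μ (B i.val) else μ (B i₀)),
    ?_, ?_, ?_, ?_, ?_, ?_⟩
  · rw [Finset.lt_inf'_iff]
    intro i _
    split <;> [assumption; exact hi₀]
  · have hle := Finset.inf'_le (b := (0 : Fin (N+1)))
      (fun i : Fin (N+1) => if 0 < μ (B i.val) then μ (B i.val) else μ (B i₀))
      (Finset.mem_univ _)
    refine ne_top_of_le_ne_top ?_ hle
    split <;> exact measure_ne_top μ _
  · intro i; dsimp only; split <;> exact hBmeas _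
  · intro i
    have hle := Finset.inf'_le (b := i)
      (fun i : Fin (N+1) => if 0 < μ (B i.val) then μ (B i.val) else μ (B i₀))
      (Finset.mem_univ _)
    by_cases hp : 0 < μ (B i.val)
    · simpa only [if_pos hp] using hle
    · simpa only [if_neg hp] using hle
  · intro i x hx y hy
    dsimp only at hx hy
    by_cases hp : 0 < μ (B i.val)
    · rw [if_pos hp] at hx hy; exact hBdiam _ x hx y hy
    · rw [if_neg hp] at hx hy; exact hBdiam _ x hx y hy
  · -- coverage
    set Y : Fin (N+1) → Set X := fun i => if 0 < μ (B i.val) then B i.val else B i₀ with hY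
    have hsub : (⋃ i, Y i)ᶜ ⊆ (Set.accumulate B N)ᶜ ∪ ⋃ i : Fin (N+1), (B i.val \ Y i) := by
      intro x hx
      by_cases hxK : x ∈ Set.accumulate B N
      · right
        rw [Set.accumulate_def] at hxK
        obtain ⟨i, hiN, hxB⟩ := mem_iUnion₂.mp hxK
        have hiN' : i < N + 1 := Nat.lt_succ_of_le hiN
        refine mem_iUnion.mpr ⟨⟨i, hiN'⟩, hxB, ?_⟩
        intro hxY
        exact hx (mem_iUnion.mpr ⟨⟨i, hiN'⟩, hxY⟩)
      · exact Or.inl hxK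
    have hL : μ (⋃ i : Fin (N+1), (B i.val \ Y i)) = 0 := by
      refine measure_iUnion_null fun i => ?_
      by_cases hp : 0 < μ (B i.val)
      · have : B i.val \ Y i = ∅ := by
          rw [hY]; dsimp only; rw [if_pos hp]; simp
        simp [this]
      · refine measure_mono_null diff_subset ?_
        exact le_antisymm (not_lt.mp hp) bot_le
    have hKmeas : MeasurableSet (Set.accumulate B N) := by
      rw [Set.accumulate_def]
      exact MeasurableSet.biUnion (Set.to_countable _) (fun i _ => hBmeas i)
    have hKc : μ (Set.accumulate B N)ᶜ ≤ ENNReal.ofReal (ε/2) := by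
      rw [measure_compl hKmeas (measure_ne_top μ _), measure_univ]
      rw [tsub_le_iff_right]
      calc (1:ℝ≥0∞) ≤ μ (Set.accumulate B N) + ENNReal.ofReal (ε/2) := by
            have := (ENNReal.sub_lt_iff_lt_right
              (hhalf.trans_le le_top).ne hhalf2).mp hN
            exact this.le
      _ = ENNReal.ofReal (ε/2) + μ (Set.accumulate B N) := add_comm _ _
    calc μ (⋃ i, Y i)ᶜ ≤ μ ((Set.accumulate B N)ᶜ ∪ ⋃ i : Fin (N+1), (B i.val \ Y i)) :=
          measure_mono hsub
    _ ≤ μ (Set.accumulate B N)ᶜ + μ (⋃ i : Fin (N+1), (B i.val \ Y i)) := measure_union_le _ _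
    _ ≤ ENNReal.ofReal (ε/2) + 0 := add_le_add hKc hL.le
    _ ≤ ENNReal.ofReal ε := by rw [add_zero]; exact ENNReal.ofReal_le_ofReal (by linarith)

/-- a sequence of measurable semimetrics uniformly bounded by `R` which
converges in `L¹(X×X, μ×μ)` to an admissible semimetric bounded by `R` also converges to
it in the m-norm. -/
theorem statement8 {X : Type*} [MeasurableSpace X] [StandardBorelSpace X]
    (μ : Measure X) [IsProbabilityMeasure μ] (R : ℝ) (hR : 0 < R)
    (ρn : ℕ → X → X → ℝ) (ρ : X → X → ℝ)
    (hρn : ∀ n, IsSemimetric (ρn n)) (hρnmeas : ∀ n, Measurable (Function.uncurry (ρn n)))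
    (hρnbdd : ∀ n x y, ρn n x y ≤ R)
    (hρ : IsSemimetric ρ) (hρadm : Admissible μ ρ) (hρbdd : ∀ x y, ρ x y ≤ R)
    (hconv : Tendsto (fun n => L1dist μ (ρn n) ρ) atTop (nhds 0)) :
    Tendsto (fun n => mdist μ (ρn n) ρ) atTop (nhds 0) := by
  classical
  obtain ⟨hρmeas, S, hSmeas, hScompl, D, hDS, hDc, hDdense⟩ := hρadm
  letI := upgradeStandardBorel X
  have hdiag : MeasurableSet {p : X × X | p.1 = p.2} :=
    MeasureTheory.StronglyMeasurable.measurableSet_eq_fun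
      measurable_fst.stronglyMeasurable measurable_snd.stronglyMeasurable
  rw [ENNReal.tendsto_atTop_zero]
  intro εt hεt
  set ε₁ : ℝ≥0∞ := min εt 1 with hε₁def
  have hε₁pos : 0 < ε₁ := lt_min hεt zero_lt_one
  have hε₁top : ε₁ ≠ ∞ := ne_top_of_le_ne_top ENNReal.one_ne_top (min_le_right _ _)
  set r : ℝ := ε₁.toReal with hrdef
  have hr : 0 < r := ENNReal.toReal_pos hε₁pos.ne' hε₁top
  set εc : ℝ := min (r / (8*R+8)) 1 with hεcdef
  have hεc0 : 0 < εc := lt_min (div_pos hr (by linarith)) one_pos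
  have hεc1 : εc ≤ 1 := min_le_right _ _
  obtain ⟨N, Y, m, hm0, hmtop, hYmeas, hmle, hYdiam, hcov⟩ :=
    exists_cover μ ρ hρmeas hρ S hSmeas hScompl D hDS hDc hDdense hεc0 hεc1
  set U : Set X := ⋃ i, Y i with hUdef
  have hUmeas : MeasurableSet U := MeasurableSet.iUnion hYmeas
  set k : ℝ≥0∞ := (m*m)⁻¹ + 2*m⁻¹ with hkdef
  have hktop : k ≠ ∞ := by
    have h1 : (m*m)⁻¹ ≠ ∞ := ENNReal.inv_ne_top.mpr (mul_ne_zero hm0.ne' hm0.ne')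
    have h2 : m⁻¹ ≠ ∞ := ENNReal.inv_ne_top.mpr hm0.ne'
    exact ENNReal.add_ne_top.mpr ⟨h1, ENNReal.mul_ne_top ENNReal.ofNat_ne_top h2⟩
  set P : ℝ≥0∞ := ENNReal.ofReal (2*R) * (2 * ENNReal.ofReal εc) + ENNReal.ofReal (4*εc)
    with hPdef
  -- the master bound
  have hbound : ∀ n, mdist μ (ρn n) ρ ≤ P + L1dist μ (ρn n) ρ * k := by
    intro n
    set δ : X → X → ℝ := fun x y => ρn n x y - ρ x y with hδdef
    have hδm : Measurable fun p : X × X => δ p.1 p.2 := (hρnmeas n).sub hρmeas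
    have hδmeas : Measurable fun p : X × X => ENNReal.ofReal |δ p.1 p.2| :=
      hδm.abs.ennreal_ofReal
    have hδbdd : ∀ x y, |δ x y| ≤ 2*R := by
      intro x y
      have h1 := hρnbdd n x y; have h2 := hρbdd x y
      have h3 := (hρn n).1 x y; have h4 := hρ.1 x y
      rw [abs_le]; constructor <;> simp only [hδdef] <;> linarith
    set Dn : ℝ≥0∞ := L1dist μ (ρn n) ρ with hDndef
    have hDn_eq : Dn = ∫⁻ p, ENNReal.ofReal |δ p.1 p.2| ∂(μ.prod μ) := rfl
    have hDnle : Dn ≤ ENNReal.ofReal (2*R) := by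
      rw [hDn_eq]
      calc ∫⁻ p, ENNReal.ofReal |δ p.1 p.2| ∂(μ.prod μ)
          ≤ ∫⁻ _, ENNReal.ofReal (2*R) ∂(μ.prod μ) :=
            lintegral_mono fun p => ENNReal.ofReal_le_ofReal (hδbdd _ _)
      _ = ENNReal.ofReal (2*R) := by rw [lintegral_const, measure_univ, mul_one]
    have hDntop : Dn ≠ ∞ := ne_top_of_le_ne_top ENNReal.ofReal_ne_top hDnle
    set H : X → ℝ≥0∞ := fun x => ∫⁻ z, ENNReal.ofReal |δ x z| ∂μ with hHdef
    have hHmeas : Measurable H := hδmeas.lintegral_prod_right'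
    have hHtop : ∀ x, H x ≠ ∞ := by
      intro x
      refine ne_top_of_le_ne_top (@ENNReal.ofReal_ne_top (2*R)) ?_
      calc H x ≤ ∫⁻ _, ENNReal.ofReal (2*R) ∂μ :=
            lintegral_mono fun z => ENNReal.ofReal_le_ofReal (hδbdd x z)
      _ = ENNReal.ofReal (2*R) := by rw [lintegral_const, measure_univ, mul_one]
    have hHint : ∫⁻ x, H x ∂μ = Dn := by
      rw [hDn_eq, lintegral_prod _ hδmeas.aemeasurable]
    set g : X → ℝ := fun x => (H x / m).toReal with hgdef
    have hgmeas : Measurable g := (hHmeas.div measurable_const).ennreal_toReal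
    have hg0 : ∀ x, 0 ≤ g x := fun x => ENNReal.toReal_nonneg
    have hgof : ∀ x, ENNReal.ofReal (g x) = H x / m :=
      fun x => ENNReal.ofReal_toReal (ENNReal.div_lt_top (hHtop x) hm0.ne').ne
    have hDmmtop : Dn / (m*m) ≠ ∞ :=
      (ENNReal.div_lt_top hDntop (mul_ne_zero hm0.ne' hm0.ne')).ne
    set c : ℝ := 4*εc + (Dn / (m*m)).toReal with hcdef
    have hc0 : 0 ≤ c := add_nonneg (by positivity) ENNReal.toReal_nonneg
    -- key claim: domination on U × U
    have hclaim : ∀ x ∈ U, ∀ y ∈ U, |δ x y| ≤ c + g x + g y := by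
      intro x hx y hy
      obtain ⟨i, hxi⟩ := mem_iUnion.mp hx
      obtain ⟨j, hyj⟩ := mem_iUnion.mp hy
      have hμi : 0 < μ (Y i) := hm0.trans_le (hmle i)
      have hμj : 0 < μ (Y j) := hm0.trans_le (hmle j)
      have hab0 : μ (Y i) * μ (Y j) ≠ 0 := mul_ne_zero hμi.ne' hμj.ne'
      have habt : μ (Y i) * μ (Y j) ≠ ∞ :=
        ENNReal.mul_ne_top (measure_ne_top μ _) (measure_ne_top μ _)
      have hm1 : Measurable fun p : X × X => ENNReal.ofReal |δ x p.1| := by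
        have : Measurable fun p : X × X => δ x p.1 :=
          ((hρnmeas n).comp (measurable_const.prodMk measurable_fst)).sub
            (hρmeas.comp (measurable_const.prodMk measurable_fst))
        exact this.abs.ennreal_ofReal
      have hm2 : Measurable fun p : X × X => ENNReal.ofReal |δ y p.2| := by
        have : Measurable fun p : X × X => δ y p.2 :=
          ((hρnmeas n).comp (measurable_const.prodMk measurable_snd)).sub
            (hρmeas.comp (measurable_const.prodMk measurable_snd))
        exact this.abs.ennreal_ofReal
      have hRHSmeas : Measurable fun p : X × X =>
          ENNReal.ofReal (4*εc) + ENNReal.ofReal |δ x p.1| + ENNReal.ofReal |δ y p.2|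
            + ENNReal.ofReal |δ p.1 p.2| :=
        ((measurable_const.add hm1).add hm2).add hδmeas
      have hprodint : ∀ f : X × X → ℝ≥0∞, Measurable f →
          ∫⁻ p in Y i ×ˢ Y j, f p ∂(μ.prod μ)
            = ∫⁻ z in Y i, ∫⁻ w in Y j, f (z, w) ∂μ ∂μ := by
        intro f hf
        rw [← Measure.prod_restrict, lintegral_prod _ hf.aemeasurable]
      have E1 : ENNReal.ofReal |δ x y| * (μ (Y i) * μ (Y j)) ≤
          ENNReal.ofReal (4*εc) * (μ (Y i) * μ (Y j)) + H x * μ (Y j)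
            + μ (Y i) * H y + Dn := by
        have hptw : ∀ p ∈ Y i ×ˢ Y j, ENNReal.ofReal |δ x y| ≤
            ENNReal.ofReal (4*εc) + ENNReal.ofReal |δ x p.1| + ENNReal.ofReal |δ y p.2|
              + ENNReal.ofReal |δ p.1 p.2| := by
          intro p hp
          have h1 : ρ x p.1 < εc := hYdiam i x hxi p.1 hp.1
          have h2 : ρ y p.2 < εc := hYdiam j y hyj p.2 hp.2
          have hkey := pt_bound (hρn n) hρ h1 h2
          calc ENNReal.ofReal |δ x y|
              ≤ ENNReal.ofReal (4*εc + |δ x p.1| + |δ y p.2| + |δ p.1 p.2|) :=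
                ENNReal.ofReal_le_ofReal hkey
          _ ≤ _ := by
              calc ENNReal.ofReal (4*εc + |δ x p.1| + |δ y p.2| + |δ p.1 p.2|)
                  ≤ ENNReal.ofReal (4*εc + |δ x p.1| + |δ y p.2|)
                    + ENNReal.ofReal |δ p.1 p.2| := ENNReal.ofReal_add_le
              _ ≤ (ENNReal.ofReal (4*εc + |δ x p.1|) + ENNReal.ofReal |δ y p.2|)
                    + ENNReal.ofReal |δ p.1 p.2| :=
                  add_le_add_left ENNReal.ofReal_add_le _
              _ ≤ ((ENNReal.ofReal (4*εc) + ENNReal.ofReal |δ x p.1|)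
                    + ENNReal.ofReal |δ y p.2|) + ENNReal.ofReal |δ p.1 p.2| :=
                  add_le_add_left (add_le_add_left ENNReal.ofReal_add_le _) _
        calc ENNReal.ofReal |δ x y| * (μ (Y i) * μ (Y j))
            = ∫⁻ _ in Y i ×ˢ Y j, ENNReal.ofReal |δ x y| ∂(μ.prod μ) := by
              rw [setLIntegral_const, Measure.prod_prod]
        _ ≤ ∫⁻ p in Y i ×ˢ Y j, (ENNReal.ofReal (4*εc) + ENNReal.ofReal |δ x p.1|
              + ENNReal.ofReal |δ y p.2| + ENNReal.ofReal |δ p.1 p.2|) ∂(μ.prod μ) :=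
            setLIntegral_mono hRHSmeas hptw
        _ = (∫⁻ p in Y i ×ˢ Y j, (ENNReal.ofReal (4*εc) + ENNReal.ofReal |δ x p.1|
                + ENNReal.ofReal |δ y p.2|) ∂(μ.prod μ))
              + ∫⁻ p in Y i ×ˢ Y j, ENNReal.ofReal |δ p.1 p.2| ∂(μ.prod μ) :=
            lintegral_add_right' _ hδmeas.aemeasurable.restrict
        _ = ((∫⁻ p in Y i ×ˢ Y j, (ENNReal.ofReal (4*εc)
                + ENNReal.ofReal |δ x p.1|) ∂(μ.prod μ))
              + ∫⁻ p in Y i ×ˢ Y j, ENNReal.ofReal |δ y p.2| ∂(μ.prod μ))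
              + ∫⁻ p in Y i ×ˢ Y j, ENNReal.ofReal |δ p.1 p.2| ∂(μ.prod μ) := by
            rw [lintegral_add_right' _ hm2.aemeasurable.restrict]
        _ = (((∫⁻ _ in Y i ×ˢ Y j, ENNReal.ofReal (4*εc) ∂(μ.prod μ))
              + ∫⁻ p in Y i ×ˢ Y j, ENNReal.ofReal |δ x p.1| ∂(μ.prod μ))
              + ∫⁻ p in Y i ×ˢ Y j, ENNReal.ofReal |δ y p.2| ∂(μ.prod μ))
              + ∫⁻ p in Y i ×ˢ Y j, ENNReal.ofReal |δ p.1 p.2| ∂(μ.prod μ) := by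
            rw [lintegral_add_right' _ hm1.aemeasurable.restrict]
        _ ≤ ENNReal.ofReal (4*εc) * (μ (Y i) * μ (Y j)) + H x * μ (Y j)
              + μ (Y i) * H y + Dn := by
            refine add_le_add (add_le_add (add_le_add ?_ ?_) ?_) ?_
            · rw [setLIntegral_const, Measure.prod_prod]
            · rw [hprodint _ hm1]
              have hzmeas : Measurable fun z : X => ENNReal.ofReal |δ x z| :=
                (((hρnmeas n).comp (measurable_const.prodMk measurable_id)).sub
                  (hρmeas.comp (measurable_const.prodMk measurable_id))).abs.ennreal_ofReal
              simp only [setLIntegral_const]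
              rw [lintegral_mul_const _ hzmeas]
              exact mul_le_mul_left (setLIntegral_le_lintegral _ _) _
            · rw [hprodint _ hm2]
              dsimp only
              rw [setLIntegral_const, mul_comm]
              exact mul_le_mul_right (setLIntegral_le_lintegral _ _) _
            · exact (setLIntegral_le_lintegral _ _).trans_eq hDn_eq.symm
      have E2 : ENNReal.ofReal |δ x y| ≤
          ENNReal.ofReal (4*εc) + H x / m + H y / m + Dn / (m*m) := by
        have hdiv := (ENNReal.le_div_iff_mul_le (Or.inl hab0) (Or.inl habt)).mpr E1
        refine hdiv.trans ?_
        rw [ENNReal.add_div, ENNReal.add_div, ENNReal.add_div]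
        refine add_le_add (add_le_add (add_le_add ?_ ?_) ?_) ?_
        · rw [mul_div_assoc, ENNReal.div_self hab0 habt, mul_one]
        · rw [mul_comm (μ (Y i)) (μ (Y j)), mul_comm (H x) (μ (Y j)),
            ENNReal.mul_div_mul_left _ _ hμj.ne' (measure_ne_top μ _)]
          exact ENNReal.div_le_div le_rfl (hmle i)
        · rw [ENNReal.mul_div_mul_left _ _ hμi.ne' (measure_ne_top μ _)]
          exact ENNReal.div_le_div le_rfl (hmle j)
        · exact ENNReal.div_le_div le_rfl (mul_le_mul' (hmle i) (hmle j))
      have E3 : ENNReal.ofReal |δ x y| ≤ ENNReal.ofReal (c + g x + g y) := by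
        have h4 : ENNReal.ofReal (c + g x + g y) =
            ENNReal.ofReal (4*εc) + H x / m + H y / m + Dn / (m*m) := by
          have hre : c + g x + g y = ((4*εc + g x) + g y) + (Dn / (m*m)).toReal := by
            rw [hcdef]; ring
          rw [hre, ENNReal.ofReal_add (by positivity) ENNReal.toReal_nonneg,
            ENNReal.ofReal_add (by positivity) (hg0 y),
            ENNReal.ofReal_add (by positivity) (hg0 x),
            hgof, hgof, ENNReal.ofReal_toReal hDmmtop]
        rw [h4]; exact E2
      have hnn : 0 ≤ c + g x + g y := by
        have := hg0 x; have := hg0 y; linarith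
      exact (ENNReal.ofReal_le_ofReal_iff hnn).mp E3
    -- the dominating semimetric
    set u : X → X → ℝ := fun x y => if x ∈ U ∧ y ∈ U then 0 else 2*R with hudef
    have hu0 : ∀ x y, 0 ≤ u x y := by
      intro x y; rw [hudef]; dsimp only; split
      · exact le_refl 0
      · linarith
    set σ : X → X → ℝ := fun x y => if x = y then 0 else (u x y + (c + g x + g y))
      with hσdef
    have hσ0 : ∀ x y, 0 ≤ σ x y := by
      intro x y; rw [hσdef]; dsimp only; split
      · exact le_refl 0
      · have := hu0 x y; have := hg0 x; have := hg0 y; linarith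
    have hσsemi : IsSemimetric σ := by
      refine ⟨hσ0, ?_, ?_, ?_⟩
      · intro x; rw [hσdef]; simp
      · intro x y
        rw [hσdef]; dsimp only
        by_cases h : x = y
        · simp [h]
        · have h' : ¬ y = x := fun e => h e.symm
          rw [if_neg h, if_neg h']
          have hcomm : (x ∈ U ∧ y ∈ U) ↔ (y ∈ U ∧ x ∈ U) := and_comm
          rw [hudef]; dsimp only
          by_cases hxy : x ∈ U ∧ y ∈ U
          · rw [if_pos hxy, if_pos (hcomm.mp hxy)]; ring
          · rw [if_neg hxy, if_neg (fun hc => hxy (hcomm.mpr hc))]; ring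
      · intro x y z
        by_cases hxz : x = z
        · have h1 := hσ0 x y; have h2 := hσ0 y z
          rw [hσdef]; dsimp only; rw [if_pos hxz]
          rw [hσdef] at h1 h2; dsimp only at h1 h2; linarith
        · by_cases hxy : x = y
          · subst hxy
            rw [hσdef]; dsimp only; rw [if_pos rfl]
            simp only [zero_add]; exact le_refl _
          · by_cases hyz : y = z
            · subst hyz
              rw [hσdef]; dsimp only; rw [if_pos rfl]
              simp only [add_zero]; exact le_refl _
            · rw [hσdef]; dsimp only
              rw [if_neg hxz, if_neg hxy, if_neg hyz]
              have hutri : u x z ≤ u x y + u y z := by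
                rw [hudef]; dsimp only
                by_cases hxU : x ∈ U
                · by_cases hzU : z ∈ U
                  · rw [if_pos ⟨hxU, hzU⟩]
                    split <;> split <;> linarith
                  · have : ¬ (y ∈ U ∧ z ∈ U) := fun hc => hzU hc.2
                    rw [if_neg (fun hc => hzU hc.2), if_neg this]
                    split <;> linarith
                · have h1 : ¬ (x ∈ U ∧ z ∈ U) := fun hc => hxU hc.1
                  have h2 : ¬ (x ∈ U ∧ y ∈ U) := fun hc => hxU hc.1
                  rw [if_neg h1, if_neg h2]
                  split <;> linarith
              have := hg0 y
              linarith
    have hσmeas : Measurable (Function.uncurry σ) := by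
      have : Function.uncurry σ = fun p : X × X => if p.1 = p.2 then 0 else
          ((if p.1 ∈ U ∧ p.2 ∈ U then 0 else 2*R) + (c + g p.1 + g p.2)) := rfl
      rw [this]
      refine Measurable.ite hdiag measurable_const ?_
      refine Measurable.add ?_ ?_
      · exact Measurable.ite
          (show MeasurableSet {p : X × X | p.1 ∈ U ∧ p.2 ∈ U} from hUmeas.prod hUmeas)
          measurable_const measurable_const
      · exact (measurable_const.add (hgmeas.comp measurable_fst)).add
          (hgmeas.comp measurable_snd)
    have hσdom : ∀ p : X × X, |ρn n p.1 p.2 - ρ p.1 p.2| ≤ σ p.1 p.2 := by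
      rintro ⟨x, y⟩
      dsimp only
      by_cases h : x = y
      · subst h
        rw [hσdef]; dsimp only; rw [if_pos rfl]
        rw [(hρn n).2.1 x, hρ.2.1 x]
        simp
      · rw [hσdef]; dsimp only; rw [if_neg h]
        by_cases hUU : x ∈ U ∧ y ∈ U
        · have hb := hclaim x hUU.1 y hUU.2
          have : u x y = 0 := by rw [hudef]; dsimp only; rw [if_pos hUU]
          rw [this, zero_add]
          exact hb
        · have : u x y = 2*R := by rw [hudef]; dsimp only; rw [if_neg hUU]
          rw [this]
          have h1 := hδbdd x y
          have := hg0 x; have := hg0 y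
          calc |ρn n x y - ρ x y| ≤ 2*R := h1
          _ ≤ 2*R + (c + g x + g y) := by linarith
    have hmem : mdist μ (ρn n) ρ ≤ ∫⁻ p, ENNReal.ofReal (σ p.1 p.2) ∂(μ.prod μ) := by
      refine sInf_le ⟨σ, hσsemi, hσmeas, ?_, rfl⟩
      exact Filter.Eventually.of_forall hσdom
    -- bound the integral
    have hgeq : ∀ x, ENNReal.ofReal (g x) = m⁻¹ * H x := by
      intro x; rw [hgof, ENNReal.div_eq_inv_mul]
    have hgint0 : ∫⁻ x, ENNReal.ofReal (g x) ∂μ = Dn / m := by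
      simp_rw [hgeq]
      rw [lintegral_const_mul _ hHmeas, hHint, ENNReal.div_eq_inv_mul]
    have hgint1 : ∫⁻ p, ENNReal.ofReal (g p.1) ∂(μ.prod μ) = Dn / m := by
      rw [lintegral_prod (fun p => ENNReal.ofReal (g p.1))
        ((hgmeas.comp measurable_fst).ennreal_ofReal).aemeasurable]
      dsimp only
      simp only [lintegral_const, measure_univ, mul_one]
      exact hgint0
    have hgint2 : ∫⁻ p, ENNReal.ofReal (g p.2) ∂(μ.prod μ) = Dn / m := by
      rw [lintegral_prod (fun p => ENNReal.ofReal (g p.2))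
        ((hgmeas.comp measurable_snd).ennreal_ofReal).aemeasurable]
      dsimp only
      rw [show (fun x => ∫⁻ y, ENNReal.ofReal (g y) ∂μ) = fun _ : X => Dn / m from
        funext fun _ => hgint0]
      rw [lintegral_const, measure_univ, mul_one]
    have hUc2 : (μ.prod μ) ((U ×ˢ U)ᶜ) ≤ 2 * ENNReal.ofReal εc := by
      rw [Set.compl_prod_eq_union]
      calc (μ.prod μ) (Uᶜ ×ˢ univ ∪ univ ×ˢ Uᶜ)
          ≤ (μ.prod μ) (Uᶜ ×ˢ univ) + (μ.prod μ) (univ ×ˢ Uᶜ) := measure_union_le _ _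
      _ = μ Uᶜ * 1 + 1 * μ Uᶜ := by rw [Measure.prod_prod, Measure.prod_prod, measure_univ]
      _ = μ Uᶜ + μ Uᶜ := by rw [mul_one, one_mul]
      _ ≤ ENNReal.ofReal εc + ENNReal.ofReal εc := add_le_add hcov hcov
      _ = 2 * ENNReal.ofReal εc := (two_mul _).symm
    have hind : Measurable fun p : X × X =>
        ((U ×ˢ U)ᶜ).indicator (fun _ => ENNReal.ofReal (2*R)) p :=
      measurable_const.indicator (hUmeas.prod hUmeas).compl
    have hint : ∫⁻ p, ENNReal.ofReal (σ p.1 p.2) ∂(μ.prod μ) ≤ P + Dn * k := by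
      have hptw : ∀ p : X × X, ENNReal.ofReal (σ p.1 p.2) ≤
          ((U ×ˢ U)ᶜ).indicator (fun _ => ENNReal.ofReal (2*R)) p
            + (ENNReal.ofReal c + (ENNReal.ofReal (g p.1) + ENNReal.ofReal (g p.2))) := by
        rintro ⟨x, y⟩
        dsimp only
        by_cases h : x = y
        · rw [hσdef]; dsimp only; rw [if_pos h, ENNReal.ofReal_zero]
          exact bot_le
        · rw [hσdef]; dsimp only; rw [if_neg h]
          have hchain : ENNReal.ofReal (u x y + (c + g x + g y)) ≤
              ENNReal.ofReal (u x y)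
                + (ENNReal.ofReal c + (ENNReal.ofReal (g x) + ENNReal.ofReal (g y))) := by
            calc ENNReal.ofReal (u x y + (c + g x + g y))
                ≤ ENNReal.ofReal (u x y) + ENNReal.ofReal (c + g x + g y) :=
                  ENNReal.ofReal_add_le
            _ ≤ ENNReal.ofReal (u x y) + (ENNReal.ofReal (c + g x) + ENNReal.ofReal (g y))
                := add_le_add_right ENNReal.ofReal_add_le _
            _ ≤ ENNReal.ofReal (u x y)
                  + ((ENNReal.ofReal c + ENNReal.ofReal (g x)) + ENNReal.ofReal (g y)) :=
                add_le_add_right (add_le_add_left ENNReal.ofReal_add_le _) _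
            _ = ENNReal.ofReal (u x y)
                  + (ENNReal.ofReal c + (ENNReal.ofReal (g x) + ENNReal.ofReal (g y))) := by
                rw [add_assoc]
          refine hchain.trans (add_le_add_left ?_ _)
          by_cases hUU : x ∈ U ∧ y ∈ U
          · have : u x y = 0 := by rw [hudef]; dsimp only; rw [if_pos hUU]
            rw [this, ENNReal.ofReal_zero]
            exact bot_le
          · have h1 : u x y = 2*R := by rw [hudef]; dsimp only; rw [if_neg hUU]
            have hpmem : ((x, y) : X × X) ∈ (U ×ˢ U)ᶜ := fun hc => hUU hc
            rw [h1, Set.indicator_of_mem hpmem]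
      calc ∫⁻ p, ENNReal.ofReal (σ p.1 p.2) ∂(μ.prod μ)
          ≤ ∫⁻ p, (((U ×ˢ U)ᶜ).indicator (fun _ => ENNReal.ofReal (2*R)) p
              + (ENNReal.ofReal c
                + (ENNReal.ofReal (g p.1) + ENNReal.ofReal (g p.2)))) ∂(μ.prod μ) :=
            lintegral_mono hptw
      _ = (∫⁻ p, ((U ×ˢ U)ᶜ).indicator (fun _ => ENNReal.ofReal (2*R)) p ∂(μ.prod μ))
            + ∫⁻ p, (ENNReal.ofReal c
                + (ENNReal.ofReal (g p.1) + ENNReal.ofReal (g p.2))) ∂(μ.prod μ) :=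
          lintegral_add_left hind _
      _ = ENNReal.ofReal (2*R) * (μ.prod μ) ((U ×ˢ U)ᶜ)
            + (ENNReal.ofReal c + (Dn / m + Dn / m)) := by
          rw [lintegral_indicator_const (hUmeas.prod hUmeas).compl]
          congr 1
          rw [lintegral_add_left measurable_const]
          rw [lintegral_const, measure_univ, mul_one]
          congr 1
          rw [lintegral_add_left (f := fun p : X × X => ENNReal.ofReal (g p.1))
            ((hgmeas.comp measurable_fst).ennreal_ofReal)]
          rw [hgint1, hgint2]
      _ ≤ ENNReal.ofReal (2*R) * (2 * ENNReal.ofReal εc)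
            + (ENNReal.ofReal c + (Dn / m + Dn / m)) :=
          add_le_add_left (mul_le_mul_right hUc2 _) _
      _ = P + Dn * k := by
          have hcofr : ENNReal.ofReal c = ENNReal.ofReal (4*εc) + Dn / (m*m) := by
            rw [hcdef, ENNReal.ofReal_add (by positivity) ENNReal.toReal_nonneg,
              ENNReal.ofReal_toReal hDmmtop]
          rw [hcofr, hPdef, hkdef]
          simp only [ENNReal.div_eq_inv_mul]
          ring
    exact hmem.trans hint
  -- conclude
  have hDtend : Tendsto (fun n => L1dist μ (ρn n) ρ * k) atTop (nhds 0) := by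
    simpa using ENNReal.Tendsto.mul_const hconv (Or.inr hktop)
  have hPle : P ≤ ε₁ / 2 := by
    have h1 : ENNReal.ofReal (2*R) * (2 * ENNReal.ofReal εc) = ENNReal.ofReal (4*R*εc) := by
      rw [show (2 : ℝ≥0∞) = ENNReal.ofReal (2:ℝ) by rw [ENNReal.ofReal_ofNat],
        ← ENNReal.ofReal_mul (by norm_num), ← ENNReal.ofReal_mul (by linarith)]
      ring_nf
    have h2 : P = ENNReal.ofReal (4*R*εc + 4*εc) := by
      rw [hPdef, h1, ← ENNReal.ofReal_add (by positivity) (by positivity)]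
    have h3 : 4*R*εc + 4*εc ≤ r/2 := by
      have hle : εc ≤ r / (8*R+8) := min_le_left _ _
      have hpos : (0:ℝ) < 8*R+8 := by linarith
      have : (4*R+4) * (r / (8*R+8)) = r/2 := by field_simp; ring
      nlinarith
    have h4 : ENNReal.ofReal (r/2) = ε₁ / 2 := by
      rw [ENNReal.ofReal_div_of_pos (by norm_num), ENNReal.ofReal_toReal hε₁top,
        ENNReal.ofReal_ofNat]
    rw [h2, ← h4]
    exact ENNReal.ofReal_le_ofReal h3
  have hhalfpos : (0:ℝ≥0∞) < ε₁ / 2 := ENNReal.half_pos hε₁pos.ne'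
  obtain ⟨n₀, hn₀⟩ := eventually_atTop.mp (hDtend.eventually (gt_mem_nhds hhalfpos))
  refine ⟨n₀, fun n hn => ?_⟩
  calc mdist μ (ρn n) ρ ≤ P + L1dist μ (ρn n) ρ * k := hbound n
  _ ≤ ε₁ / 2 + ε₁ / 2 := add_le_add hPle (hn₀ n hn).le
  _ = ε₁ := ENNReal.add_halves ε₁
  _ ≤ εt := min_le_left _ _
end

section
/- Let (X, μ) be a standard Borel probability space, let p be a summable measurable semimetric on X, and let R > 0. Denote by p^{2R} the cut-off p^{2R}(x,y) = min(p(x,y), 2R). Then ‖p − p^{2R}‖_m ≤ 2 ∫∫_{{(x,y) : p(x,y) > R}} p(x,y) dμ(x)dμ(y). -/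
open MeasureTheory Filter Function Set
open scoped ENNReal

/-- cut-off lemma: for a summable measurable semimetric `ρ` and `R > 0`,
the m-norm of `ρ − ρ^{2R}` (where `ρ^{2R} = min(ρ, 2R)`) is at most
`2 ∫∫_{ρ > R} ρ dμ dμ`. -/
theorem statement9 {X : Type*} [MeasurableSpace X] [StandardBorelSpace X]
    (μ : Measure X) [IsProbabilityMeasure μ] (ρ : X → X → ℝ)
    (hρ : IsSemimetric ρ) (hmeas : Measurable (Function.uncurry ρ))
    (hint : Integrable (Function.uncurry ρ) (μ.prod μ)) (R : ℝ) (hR : 0 < R) :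
    mnorm μ (fun x y => ρ x y - min (ρ x y) (2 * R)) ≤
      2 * ∫⁻ q in {q : X × X | R < ρ q.1 q.2}, ENNReal.ofReal (ρ q.1 q.2) ∂(μ.prod μ) := by
  obtain ⟨hnn, hdiag, hsymm, htri⟩ := hρ
  set I := ∫⁻ q in {q : X × X | R < ρ q.1 q.2}, ENNReal.ofReal (ρ q.1 q.2) ∂(μ.prod μ) with hIdef
  rcases eq_or_ne I ∞ with hItop | hItop
  · rw [hItop]; simp
  have hset : MeasurableSet {q : X × X | R < ρ q.1 q.2} :=
    measurableSet_lt measurable_const hmeas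
  -- the function G
  set G : X → ℝ≥0∞ := fun y => ∫⁻ x, ENNReal.ofReal (max (ρ x y - R) 0) ∂μ with hGdef
  have hFmeas : Measurable fun p : X × X => ENNReal.ofReal (max (ρ p.1 p.2 - R) 0) :=
    ((hmeas.sub measurable_const).max measurable_const).ennreal_ofReal
  have hGmeas : Measurable G := by
    apply Measurable.lintegral_prod_left
    exact hFmeas
  have hGint : ∫⁻ y, G y ∂μ ≤ I := by
    have hswap : ∫⁻ y, G y ∂μ
        = ∫⁻ p : X × X, ENNReal.ofReal (max (ρ p.1 p.2 - R) 0) ∂(μ.prod μ) := by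
      rw [lintegral_prod _ hFmeas.aemeasurable]
      simp only [hGdef]
      congr 1
      ext y
      congr 1
      ext x
      rw [hsymm x y]
    rw [hswap, hIdef, ← lintegral_indicator hset]
    apply lintegral_mono
    intro p
    simp only [Set.indicator_apply, Set.mem_setOf_eq]
    split_ifs with hp
    · apply ENNReal.ofReal_le_ofReal
      have := hnn p.1 p.2
      apply max_le <;> linarith
    · have hmax : max (ρ p.1 p.2 - R) 0 = 0 := by
        rw [max_eq_right]
        push_neg at hp
        linarith
      simp [hmax]
  -- find a good base point x₀
  have hx0 : ∃ x₀, G x₀ ≤ I := by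
    by_contra hcon
    push_neg at hcon
    have hGI : ∀ᵐ x ∂μ, I ≤ G x := ae_of_all _ fun x => (hcon x).le
    have hsub : ∫⁻ x, (G x - I) ∂μ = ∫⁻ x, G x ∂μ - I := by
      rw [lintegral_sub measurable_const (by simp only [lintegral_const, measure_univ, mul_one]; exact hItop) hGI]
      simp only [lintegral_const, measure_univ, mul_one]
      rfl
    have hzero : ∫⁻ x, (G x - I) ∂μ = 0 := by
      rw [hsub]
      exact tsub_eq_zero_of_le hGint
    replace hzero := (lintegral_eq_zero_iff (f := fun x => G x - I) (hGmeas.sub measurable_const)).1 hzero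
    have hne : (MeasureTheory.ae μ).NeBot := ae_neBot.2 (IsProbabilityMeasure.ne_zero μ)
    obtain ⟨x, hx⟩ := hzero.exists
    simp only [Pi.zero_apply, tsub_eq_zero_iff_le] at hx
    exact absurd hx (not_le.2 (hcon x))
  obtain ⟨x₀, hx₀⟩ := hx0
  set g : X → ℝ := fun x => max (ρ x x₀ - R) 0 with hgdef
  have hg0 : ∀ x, 0 ≤ g x := fun x => le_max_right _ _
  have hg1 : ∀ x, ρ x x₀ - R ≤ g x := fun x => le_max_left _ _
  have hgmeas : Measurable g :=
    ((hmeas.comp (measurable_id.prodMk measurable_const)).sub measurable_const).max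
      measurable_const
  have hglip : ∀ a b, g a ≤ ρ a b + g b := by
    intro a b
    apply max_le
    · have := htri a b x₀
      have := hg1 b
      linarith
    · have := hnn a b
      have := hg0 b
      linarith
  set σ : X → X → ℝ := fun x y => min (ρ x y) (g x + g y) with hσdef
  have hσnn : ∀ x y, 0 ≤ σ x y := fun x y =>
    le_min (hnn x y) (add_nonneg (hg0 x) (hg0 y))
  have hσsemi : IsSemimetric σ := by
    refine ⟨hσnn, ?_, ?_, ?_⟩
    · intro x
      simp only [hσdef]
      rw [hdiag x, min_eq_left (add_nonneg (hg0 x) (hg0 x))]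
    · intro x y
      simp only [hσdef]
      rw [hsymm x y, add_comm (g x) (g y)]
    · intro x y z
      show min (ρ x z) (g x + g z) ≤
        min (ρ x y) (g x + g y) + min (ρ y z) (g y + g z)
      rcases min_cases (ρ x y) (g x + g y) with ⟨h1, _⟩ | ⟨h1, _⟩ <;>
        rcases min_cases (ρ y z) (g y + g z) with ⟨h2, _⟩ | ⟨h2, _⟩ <;>
        rw [h1, h2]
      · exact le_trans (min_le_left _ _) (htri x y z)
      · refine le_trans (min_le_right _ _) ?_
        have := hglip x y
        linarith
      · refine le_trans (min_le_right _ _) ?_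
        have := hglip z y
        have := hsymm y z
        linarith
      · refine le_trans (min_le_right _ _) ?_
        have := hg0 y
        linarith
  have hσmeas : Measurable (Function.uncurry σ) := by
    exact hmeas.min ((hgmeas.comp measurable_fst).add (hgmeas.comp measurable_snd))
  have hdom : ∀ᵐ p ∂(μ.prod μ),
      |ρ p.1 p.2 - min (ρ p.1 p.2) (2 * R)| ≤ σ p.1 p.2 := by
    apply ae_of_all
    rintro ⟨x, y⟩
    simp only
    rcases le_or_gt (ρ x y) (2 * R) with hle | hlt
    · rw [min_eq_left hle]
      simpa using hσnn x y
    · rw [min_eq_right hlt.le, abs_of_nonneg (by linarith)]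
      apply le_min
      · linarith
      · have h1 := hg1 x
        have h2 := hg1 y
        have h3 := htri x x₀ y
        have h4 := hsymm x₀ y
        linarith
  have hσint : ∫⁻ p, ENNReal.ofReal (σ p.1 p.2) ∂(μ.prod μ) ≤ 2 * I := by
    have hle : ∫⁻ p, ENNReal.ofReal (σ p.1 p.2) ∂(μ.prod μ)
        ≤ ∫⁻ p : X × X, (ENNReal.ofReal (g p.1) + ENNReal.ofReal (g p.2)) ∂(μ.prod μ) := by
      apply lintegral_mono
      rintro ⟨x, y⟩
      show ENNReal.ofReal (σ x y) ≤ ENNReal.ofReal (g x) + ENNReal.ofReal (g y)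
      rw [← ENNReal.ofReal_add (hg0 x) (hg0 y)]
      exact ENNReal.ofReal_le_ofReal (min_le_right _ _)
    have hmf : Measurable fun p : X × X => ENNReal.ofReal (g p.1) := by
      exact (hgmeas.ennreal_ofReal).comp measurable_fst
    have hms : Measurable fun p : X × X => ENNReal.ofReal (g p.2) := by
      exact (hgmeas.ennreal_ofReal).comp measurable_snd
    have hfst : ∫⁻ p : X × X, ENNReal.ofReal (g p.1) ∂(μ.prod μ) = G x₀ := by
      rw [lintegral_prod _ hmf.aemeasurable]
      simp [hGdef, hgdef, lintegral_const]
    have hsnd : ∫⁻ p : X × X, ENNReal.ofReal (g p.2) ∂(μ.prod μ) = G x₀ := by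
      rw [lintegral_prod _ hms.aemeasurable]
      simp [hGdef, hgdef, lintegral_const]
    calc ∫⁻ p, ENNReal.ofReal (σ p.1 p.2) ∂(μ.prod μ)
        ≤ ∫⁻ p : X × X, (ENNReal.ofReal (g p.1) + ENNReal.ofReal (g p.2)) ∂(μ.prod μ) := hle
      _ = G x₀ + G x₀ := by
          rw [lintegral_add_left hmf, hfst, hsnd]
      _ = 2 * G x₀ := by ring
      _ ≤ 2 * I := by exact mul_le_mul_right hx₀ 2
  refine le_trans (sInf_le ?_) hσint
  exact ⟨σ, hσsemi, hσmeas, hdom, rfl⟩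
end
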